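/- arXiv:2301.00586 — 6 statements merged into one kernel-verified Lean document; each statement's English description precedes it below -/
import Mathlib

section
/- The Jacobi operator (T, D(T)) associated with an indeterminate moment problem is regular: for every z ∈ ℂ there exists d(z) > 0 such that ‖Tc − z·c‖ ≥ d(z)·‖c‖ for all c ∈ D(T). -/
open Filter Topology MeasureTheory

noncomputable section

/-- Action of the Jacobi matrix `J` on a complex sequence:
`(Jc)ₙ = aₙ₋₁cₙ₋₁ + bₙcₙ + aₙcₙ₊₁` with `a₋₁ := 0`. -/
def jacobiMul (a b : ℕ → ℝ) (c : ℕ → ℂ) : ℕ → ℂ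
  | 0 => (b 0 : ℂ) * c 0 + (a 0 : ℂ) * c 1
  | n + 1 => (a n : ℂ) * c n + (b (n + 1) : ℂ) * c (n + 1) + (a (n + 1) : ℂ) * c (n + 2)

/-- `jacobiGraph a b f g` means: `f` belongs to the domain `D(T)` of the closure `T` of the
Jacobi matrix acting on the finitely supported sequences, and `T f = g`; i.e. there are
finitely supported sequences `u k → f` in `ℓ²` such that `J (u k) → g` in `ℓ²`. -/
def jacobiGraph (a b : ℕ → ℝ) (f g : ℕ → ℂ) : Prop :=
  ∃ u : ℕ → ℕ → ℂ,
    (∀ k, (Function.support (u k)).Finite) ∧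
    (∀ k, Summable fun n => ‖u k n - f n‖ ^ 2) ∧
    Tendsto (fun k => ∑' n, ‖u k n - f n‖ ^ 2) atTop (𝓝 0) ∧
    (∀ k, Summable fun n => ‖jacobiMul a b (u k) n - g n‖ ^ 2) ∧
    Tendsto (fun k => ∑' n, ‖jacobiMul a b (u k) n - g n‖ ^ 2) atTop (𝓝 0)

/-- Membership in the domain `D(T)` of the Jacobi operator. -/
def inDomT (a b : ℕ → ℝ) (f : ℕ → ℂ) : Prop := ∃ g, jacobiGraph a b f g

/-- The `ℓ²` norm of a complex sequence. -/
def l2norm (f : ℕ → ℂ) : ℝ := Real.sqrt (∑' n, ‖f n‖ ^ 2)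

/-- The data of an indeterminate Hamburger moment problem: Jacobi parameters `a`, `b`,
the orthonormal polynomials `p` and second-kind polynomials `q` (as entire functions),
determined by the three-term recurrence, together with the indeterminacy condition
`∑ₙ (|pₙ(z)|² + |qₙ(z)|²) < ∞` for all `z`. -/
structure JacobiSetup where
  a : ℕ → ℝ
  b : ℕ → ℝ
  ha : ∀ n, 0 < a n
  p : ℕ → ℂ → ℂ
  q : ℕ → ℂ → ℂ
  hp0 : ∀ z, p 0 z = 1
  hp1 : ∀ z, p 1 z = (z - (b 0 : ℂ)) / (a 0 : ℂ)
  hq0 : ∀ z, q 0 z = 0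
  hq1 : ∀ z, q 1 z = 1 / (a 0 : ℂ)
  hrecp : ∀ n z, z * p (n + 1) z =
    (a (n + 1) : ℂ) * p (n + 2) z + (b (n + 1) : ℂ) * p (n + 1) z + (a n : ℂ) * p n z
  hrecq : ∀ n z, z * q (n + 1) z =
    (a (n + 1) : ℂ) * q (n + 2) z + (b (n + 1) : ℂ) * q (n + 1) z + (a n : ℂ) * q n z
  indet : ∀ z : ℂ, Summable fun n => ‖p n z‖ ^ 2 + ‖q n z‖ ^ 2

/-- The Nevanlinna function `A(u,v)`. -/
def nevA (S : JacobiSetup) (u v : ℂ) : ℂ := (u - v) * ∑' k, S.q k u * S.q k v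
/-- The Nevanlinna function `B(u,v)`. -/
def nevB (S : JacobiSetup) (u v : ℂ) : ℂ := -1 + (u - v) * ∑' k, S.p k u * S.q k v
/-- The Nevanlinna function `C(u,v)`. -/
def nevC (S : JacobiSetup) (u v : ℂ) : ℂ := 1 + (u - v) * ∑' k, S.q k u * S.p k v
/-- The Nevanlinna function `D(u,v)`. -/
def nevD (S : JacobiSetup) (u v : ℂ) : ℂ := (u - v) * ∑' k, S.p k u * S.p k v

namespace Stmt13Aux

lemma jacobiMul_zero (a b : ℕ → ℝ) (c : ℕ → ℂ) :
    jacobiMul a b c 0 = (b 0 : ℂ) * c 0 + (a 0 : ℂ) * c 1 := rfl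

lemma jacobiMul_succ (a b : ℕ → ℝ) (c : ℕ → ℂ) (n : ℕ) :
    jacobiMul a b c (n + 1)
      = (a n : ℂ) * c n + (b (n + 1) : ℂ) * c (n + 1) + (a (n + 1) : ℂ) * c (n + 2) := rfl

lemma sum_by_parts (a b : ℕ → ℝ) (c d : ℕ → ℂ) (M : ℕ) :
    ∑ m ∈ Finset.range (M+1), (jacobiMul a b c m * d m - c m * jacobiMul a b d m)
      = (a M : ℂ) * (c (M+1) * d M - c M * d (M+1)) := by
  induction M with
  | zero =>
      rw [Finset.range_one, Finset.sum_singleton, jacobiMul_zero, jacobiMul_zero]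
      ring
  | succ M ih =>
      rw [Finset.sum_range_succ, ih, jacobiMul_succ, jacobiMul_succ]
      ring

lemma wronskian (S : JacobiSetup) (z : ℂ) (m : ℕ) :
    (S.a m : ℂ) * (S.p m z * S.q (m+1) z - S.p (m+1) z * S.q m z) = 1 := by
  induction m with
  | zero =>
      have h0 : (S.a 0 : ℂ) ≠ 0 := by exact_mod_cast (S.ha 0).ne'
      rw [S.hp0, S.hq1, S.hq0]
      field_simp
      ring
  | succ m ih =>
      linear_combination ih + S.q (m+1) z * S.hrecp m z - S.p (m+1) z * S.hrecq m z


/-- Green's kernel for the Jacobi operator at `z`. -/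
def G (S : JacobiSetup) (z : ℂ) (n m : ℕ) : ℂ := S.p (min n m) z * S.q (max n m) z

lemma green_delta (S : JacobiSetup) (z : ℂ) (n m : ℕ) :
    jacobiMul S.a S.b (fun j => G S z n j) m - z * G S z n m
      = if n = m then 1 else 0 := by
  have h0 : (S.a 0 : ℂ) ≠ 0 := by exact_mod_cast (S.ha 0).ne'
  match m with
  | 0 =>
      rw [jacobiMul_zero]
      simp only [G]
      rcases Nat.eq_zero_or_pos n with rfl | hn
      · simp only [Nat.min_self, Nat.max_self, min_eq_left (Nat.zero_le 1),
          max_eq_right (Nat.zero_le 1), if_pos rfl]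
        rw [S.hp0, S.hq0, S.hq1]
        field_simp
        simp
      · rw [min_eq_right (Nat.zero_le n), max_eq_left (Nat.zero_le n),
          min_eq_right hn, max_eq_left hn, if_neg (by omega)]
        rw [S.hp0, S.hp1]
        field_simp
        ring
  | m + 1 =>
      rw [jacobiMul_succ]
      simp only [G]
      rcases lt_trichotomy n (m+1) with hlt | rfl | hgt
      · have hn : n ≤ m := by omega
        rw [min_eq_left hn, max_eq_right hn,
          min_eq_left (by omega : n ≤ m+1), max_eq_right (by omega : n ≤ m+1),
          min_eq_left (by omega : n ≤ m+2), max_eq_right (by omega : n ≤ m+2),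
          if_neg (by omega)]
        linear_combination -S.p n z * S.hrecq m z
      · rw [min_eq_right (by omega : m ≤ m+1), max_eq_left (by omega : m ≤ m+1),
          Nat.min_self, Nat.max_self,
          min_eq_left (by omega : m+1 ≤ m+2), max_eq_right (by omega : m+1 ≤ m+2),
          if_pos rfl]
        linear_combination wronskian S z m - S.p (m+1) z * S.hrecq m z
      · have hn : m + 2 ≤ n := by omega
        rw [min_eq_right (by omega : m ≤ n), max_eq_left (by omega : m ≤ n),
          min_eq_right (by omega : m+1 ≤ n), max_eq_left (by omega : m+1 ≤ n),
          min_eq_right hn, max_eq_left hn, if_neg (by omega)]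
        linear_combination -S.q n z * S.hrecp m z


lemma rep (S : JacobiSetup) (z : ℂ) (u : ℕ → ℂ) (N : ℕ) (hu : ∀ m, N ≤ m → u m = 0)
    (M n : ℕ) (hM : N ≤ M) (hn : n < M + 1) :
    u n = ∑ m ∈ Finset.range (M+1), G S z n m * (jacobiMul S.a S.b u m - z * u m) := by
  have h1 := sum_by_parts S.a S.b u (fun j => G S z n j) M
  rw [hu M hM, hu (M+1) (by omega)] at h1
  have h1' : ∑ m ∈ Finset.range (M+1),
      (jacobiMul S.a S.b u m * G S z n m
        - u m * jacobiMul S.a S.b (fun j => G S z n j) m) = 0 := by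
    rw [h1]; ring
  have h2 : ∑ m ∈ Finset.range (M+1), G S z n m * (jacobiMul S.a S.b u m - z * u m)
      = ∑ m ∈ Finset.range (M+1),
          u m * (jacobiMul S.a S.b (fun j => G S z n j) m - z * G S z n m) := by
    rw [← sub_eq_zero, ← Finset.sum_sub_distrib, ← h1']
    apply Finset.sum_congr rfl
    intro m _; ring
  rw [h2]
  have h3 : ∀ m, u m * (jacobiMul S.a S.b (fun j => G S z n j) m - z * G S z n m)
      = if n = m then u m else 0 := by
    intro m; rw [green_delta]; split <;> simp
  simp_rw [h3]
  rw [Finset.sum_ite_eq, if_pos (Finset.mem_range.mpr hn)]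


lemma core (S : JacobiSetup) (z : ℂ) (u : ℕ → ℂ) (N : ℕ) (hu : ∀ m, N ≤ m → u m = 0) :
    ∑' n, ‖u n‖^2
      ≤ (∑' n, (‖S.p n z‖^2 + ‖S.q n z‖^2)) * ((∑' n, (‖S.p n z‖^2 + ‖S.q n z‖^2)) *
          ∑' n, ‖jacobiMul S.a S.b u n - z * u n‖^2) := by
  set r : ℕ → ℝ := fun n => ‖S.p n z‖^2 + ‖S.q n z‖^2 with hrdef
  have hr : Summable r := S.indet z
  set w : ℕ → ℂ := fun m => jacobiMul S.a S.b u m - z * u m with hwdef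
  have hrnn : ∀ n, 0 ≤ r n := fun n => add_nonneg (sq_nonneg _) (sq_nonneg _)
  set Mz : ℝ := ∑' n, r n with hMzdef
  have hMz0 : 0 ≤ Mz := tsum_nonneg hrnn
  have hw0 : ∀ m, N + 1 ≤ m → w m = 0 := by
    intro m hm
    match m, hm with
    | k + 1, hm =>
      simp only [hwdef, jacobiMul_succ, hu k (by omega), hu (k+1) (by omega),
        hu (k+2) (by omega)]
      ring
  have hwsum : Summable fun m => ‖w m‖^2 := by
    apply summable_of_ne_finset_zero (s := Finset.range (N+1))
    intro m hm
    rw [hw0 m (by have := Finset.mem_range.not.mp hm; omega)]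
    simp
  have husum : Summable fun n => ‖u n‖^2 := by
    apply summable_of_ne_finset_zero (s := Finset.range N)
    intro m hm
    rw [hu m (by simpa using Finset.mem_range.not.mp hm)]
    simp
  set W : ℝ := ∑' m, ‖w m‖^2 with hWdef
  have hW0 : 0 ≤ W := tsum_nonneg fun m => sq_nonneg _
  have hG : ∀ n m, ‖G S z n m‖^2 ≤ r n * r m := by
    intro n m
    rcases le_total n m with h | h
    · rw [G, min_eq_left h, max_eq_right h, norm_mul, mul_pow]
      exact mul_le_mul (le_add_of_nonneg_right (sq_nonneg _))
        (le_add_of_nonneg_left (sq_nonneg _)) (sq_nonneg _) (hrnn n)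
    · rw [G, min_eq_right h, max_eq_left h, norm_mul, mul_pow, mul_comm (r n)]
      exact mul_le_mul (le_add_of_nonneg_right (sq_nonneg _))
        (le_add_of_nonneg_left (sq_nonneg _)) (sq_nonneg _) (hrnn m)
  have key : ∀ n, ‖u n‖^2 ≤ r n * (Mz * W) := by
    intro n
    set M : ℕ := max N n with hMdef
    have hrep := rep S z u N hu M n (le_max_left _ _) (by omega)
    calc ‖u n‖^2 = ‖∑ m ∈ Finset.range (M+1), G S z n m * w m‖^2 := by rw [← hrep]
      _ ≤ (∑ m ∈ Finset.range (M+1), ‖G S z n m‖ * ‖w m‖)^2 := by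
          apply pow_le_pow_left₀ (norm_nonneg _)
          refine (norm_sum_le _ _).trans (le_of_eq ?_)
          exact Finset.sum_congr rfl fun m _ => norm_mul _ _
      _ ≤ (∑ m ∈ Finset.range (M+1), ‖G S z n m‖^2)
            * (∑ m ∈ Finset.range (M+1), ‖w m‖^2) :=
          Finset.sum_mul_sq_le_sq_mul_sq _ _ _
      _ ≤ (r n * Mz) * W := by
          apply mul_le_mul
          · calc ∑ m ∈ Finset.range (M+1), ‖G S z n m‖^2
                ≤ ∑ m ∈ Finset.range (M+1), r n * r m :=
                  Finset.sum_le_sum fun m _ => hG n m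
              _ = r n * ∑ m ∈ Finset.range (M+1), r m := by rw [Finset.mul_sum]
              _ ≤ r n * Mz := by
                  exact mul_le_mul_of_nonneg_left
                    (hr.sum_le_tsum _ (fun m _ => hrnn m)) (hrnn n)
          · exact hwsum.sum_le_tsum _ (fun m _ => sq_nonneg _)
          · exact Finset.sum_nonneg fun m _ => sq_nonneg _
          · exact mul_nonneg (hrnn n) hMz0
      _ = r n * (Mz * W) := by ring
  calc ∑' n, ‖u n‖^2 ≤ ∑' n, r n * (Mz * W) :=
        husum.tsum_le_tsum key (hr.mul_right _)
    _ = Mz * (Mz * W) := by rw [tsum_mul_right]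


lemma summable_sq_of_eventually_zero {x : ℕ → ℂ} (N : ℕ) (h : ∀ m, N ≤ m → x m = 0) :
    Summable fun n => ‖x n‖^2 :=
  summable_of_ne_finset_zero (s := Finset.range N) fun m hm => by
    rw [h m (by simpa using Finset.mem_range.not.mp hm)]; simp

lemma jacobi_eventually_zero (a b : ℕ → ℝ) {x : ℕ → ℂ} (N : ℕ)
    (h : ∀ m, N ≤ m → x m = 0) :
    ∀ m, N + 2 ≤ m → jacobiMul a b x m = 0 := by
  intro m hm
  match m, hm with
  | k + 1, hm =>
    rw [jacobiMul_succ, h k (by omega), h (k+1) (by omega), h (k+2) (by omega)]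
    ring

lemma memℓp_two_of (f : ℕ → ℂ) (h : Summable fun n => ‖f n‖^2) :
    Memℓp f (2 : ENNReal) := by
  apply memℓp_gen
  have h2 : ((2:ENNReal).toReal) = (2:ℝ) := by norm_num
  rw [h2]
  convert h using 2 with n
  rw [← Real.rpow_natCast ‖f n‖ 2]
  norm_num

lemma lp_norm_eq (F : lp (fun _ : ℕ => ℂ) 2) :
    ‖F‖ = Real.sqrt (∑' n, ‖F n‖^2) := by
  rw [lp.norm_eq_tsum_rpow (by norm_num) F, Real.sqrt_eq_rpow]
  have h2 : ((2:ENNReal).toReal) = (2:ℝ) := by norm_num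
  rw [h2]
  congr 1
  exact tsum_congr fun n => by
    rw [← Real.rpow_natCast ‖F n‖ 2]; norm_num

end Stmt13Aux

/-- The Jacobi operator of an indeterminate moment problem is regular: for every `z ∈ ℂ`
there is `d(z) > 0` with `‖Tc − zc‖ ≥ d(z)‖c‖` for all `c ∈ D(T)`. -/
theorem stmt13 (S : JacobiSetup) (z : ℂ) :
    ∃ d : ℝ, 0 < d ∧ ∀ f g : ℕ → ℂ, jacobiGraph S.a S.b f g →
      d * l2norm f ≤ l2norm fun n => g n - z * f n := by
  classical
  haveI : Fact ((1:ENNReal) ≤ 2) := ⟨one_le_two⟩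
  open Stmt13Aux in
  set r : ℕ → ℝ := fun n => ‖S.p n z‖^2 + ‖S.q n z‖^2 with hrdef
  have hr : Summable r := S.indet z
  have hrnn : ∀ n, 0 ≤ r n := fun n => add_nonneg (sq_nonneg _) (sq_nonneg _)
  set Mz : ℝ := ∑' n, r n with hMzdef
  have hMz1 : (1:ℝ) ≤ Mz := by
    have h0 : r 0 = 1 := by simp [hrdef, S.hp0 z, S.hq0 z]
    calc (1:ℝ) = r 0 := h0.symm
      _ ≤ Mz := hr.le_tsum 0 fun m _ => hrnn m
  have hMzpos : (0:ℝ) < Mz := lt_of_lt_of_le one_pos hMz1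
  have hMz0 : (0:ℝ) ≤ Mz := hMzpos.le
  refine ⟨Mz⁻¹, inv_pos.mpr hMzpos, ?_⟩
  rintro f g ⟨u, hufin, husum, hulim, hJsum, hJlim⟩
  have hbd : ∀ k, ∃ N, ∀ m, N ≤ m → u k m = 0 := by
    intro k
    obtain ⟨N, hN⟩ := (hufin k).bddAbove
    refine ⟨N+1, fun m hm => ?_⟩
    by_contra h
    exact absurd (hN (Function.mem_support.mpr h)) (by omega)
  choose Nb hNb using hbd
  have humem : ∀ k, Memℓp (u k) (2:ENNReal) := fun k =>
    Stmt13Aux.memℓp_two_of _ (Stmt13Aux.summable_sq_of_eventually_zero (Nb k) (hNb k))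
  have hJmem : ∀ k, Memℓp (jacobiMul S.a S.b (u k)) (2:ENNReal) := fun k =>
    Stmt13Aux.memℓp_two_of _ (Stmt13Aux.summable_sq_of_eventually_zero (Nb k + 2)
      (Stmt13Aux.jacobi_eventually_zero S.a S.b (Nb k) (hNb k)))
  have hfmem : Memℓp f (2:ENNReal) := by
    have h1 := humem 0
    have h2 : Memℓp (fun n => u 0 n - f n) (2:ENNReal) :=
      Stmt13Aux.memℓp_two_of _ (husum 0)
    have h3 := h1.sub h2
    have he : (u 0 - fun n => u 0 n - f n) = f := by funext n; simp
    rwa [he] at h3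
  have hgmem : Memℓp g (2:ENNReal) := by
    have h1 := hJmem 0
    have h2 : Memℓp (fun n => jacobiMul S.a S.b (u 0) n - g n) (2:ENNReal) :=
      Stmt13Aux.memℓp_two_of _ (hJsum 0)
    have h3 := h1.sub h2
    have he : (jacobiMul S.a S.b (u 0) - fun n => jacobiMul S.a S.b (u 0) n - g n) = g := by
      funext n; simp
    rwa [he] at h3
  let F : lp (fun _ : ℕ => ℂ) 2 := ⟨f, hfmem⟩
  let Gl : lp (fun _ : ℕ => ℂ) 2 := ⟨g, hgmem⟩
  let U : ℕ → lp (fun _ : ℕ => ℂ) 2 := fun k => ⟨u k, humem k⟩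
  let JU : ℕ → lp (fun _ : ℕ => ℂ) 2 := fun k => ⟨jacobiMul S.a S.b (u k), hJmem k⟩
  have hUF : Tendsto U atTop (𝓝 F) := by
    rw [tendsto_iff_norm_sub_tendsto_zero]
    have hnorm : ∀ k, ‖U k - F‖ = Real.sqrt (∑' n, ‖u k n - f n‖^2) := by
      intro k
      rw [Stmt13Aux.lp_norm_eq]
      congr 1
    simp only [hnorm]
    have := (Real.continuous_sqrt.tendsto 0).comp hulim
    simpa [Function.comp_def] using this
  have hJG : Tendsto JU atTop (𝓝 Gl) := by
    rw [tendsto_iff_norm_sub_tendsto_zero]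
    have hnorm : ∀ k, ‖JU k - Gl‖
        = Real.sqrt (∑' n, ‖jacobiMul S.a S.b (u k) n - g n‖^2) := by
      intro k
      rw [Stmt13Aux.lp_norm_eq]
      congr 1
    simp only [hnorm]
    have := (Real.continuous_sqrt.tendsto 0).comp hJlim
    simpa [Function.comp_def] using this
  have hV : Tendsto (fun k => JU k - z • U k) atTop (𝓝 (Gl - z • F)) :=
    hJG.sub (hUF.const_smul z)
  have hkb : ∀ k, Mz⁻¹ * ‖U k‖ ≤ ‖JU k - z • U k‖ := by
    intro k
    have hcore := Stmt13Aux.core S z (u k) (Nb k) (hNb k)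
    have h1 : ‖U k‖ = Real.sqrt (∑' n, ‖u k n‖^2) := by
      rw [Stmt13Aux.lp_norm_eq]
    have h2 : ‖JU k - z • U k‖
        = Real.sqrt (∑' n, ‖jacobiMul S.a S.b (u k) n - z * u k n‖^2) := by
      rw [Stmt13Aux.lp_norm_eq]
      congr 1
    rw [h1, h2, inv_mul_le_iff₀ hMzpos]
    calc Real.sqrt (∑' n, ‖u k n‖^2)
        ≤ Real.sqrt (Mz^2 * ∑' n, ‖jacobiMul S.a S.b (u k) n - z * u k n‖^2) := by
          apply Real.sqrt_le_sqrt
          calc ∑' n, ‖u k n‖^2 ≤ Mz * (Mz * ∑' n, ‖jacobiMul S.a S.b (u k) n - z * u k n‖^2) :=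
                hcore
            _ = Mz^2 * ∑' n, ‖jacobiMul S.a S.b (u k) n - z * u k n‖^2 := by ring
      _ = Mz * Real.sqrt (∑' n, ‖jacobiMul S.a S.b (u k) n - z * u k n‖^2) := by
          rw [Real.sqrt_mul (sq_nonneg Mz), Real.sqrt_sq hMz0]
  have hlim1 : Tendsto (fun k => Mz⁻¹ * ‖U k‖) atTop (𝓝 (Mz⁻¹ * ‖F‖)) :=
    (hUF.norm).const_mul _
  have hfinal := le_of_tendsto_of_tendsto' hlim1 hV.norm hkb
  have hF : ‖F‖ = l2norm f := by rw [Stmt13Aux.lp_norm_eq]; rfl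
  have hGF : ‖Gl - z • F‖ = l2norm fun n => g n - z * f n := by
    rw [Stmt13Aux.lp_norm_eq]
    unfold l2norm
    congr 1
  rw [hF] at hfinal
  rw [hGF] at hfinal
  exact hfinal
end
end

section
/- For all z, z₀ ∈ ℂ with z ≠ z₀, one has Σₙ |(pₙ(z) − pₙ(z₀))/(z − z₀)|² ≤ ‖𝔭_z‖²·(‖𝔭_{z₀}‖² + ‖𝔮_{z₀}‖²)². Consequently, Σₙ |pₙ'(z₀)|² ≤ ‖𝔭_{z₀}‖²·(‖𝔭_{z₀}‖² + ‖𝔮_{z₀}‖²)². -/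
open Filter Topology MeasureTheory

noncomputable section

namespace Stmt14Aux
open Finset
variable (S : JacobiSetup)

lemma ha' (n : ℕ) : (S.a n : ℂ) ≠ 0 := by
  exact_mod_cast Complex.ofReal_ne_zero.2 (S.ha n).ne'

lemma cd_pp (u v : ℂ) : ∀ n : ℕ,
    (u - v) * ∑ k ∈ range (n + 1), S.p k u * S.p k v =
      (S.a n : ℂ) * (S.p (n + 1) u * S.p n v - S.p n u * S.p (n + 1) v) := by
  intro n
  induction n with
  | zero =>
    rw [range_one, sum_singleton, S.hp0 u, S.hp0 v, S.hp1 u, S.hp1 v]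
    field_simp [ha' S 0]
    ring
  | succ m ih =>
    rw [Finset.sum_range_succ, mul_add]
    have h1 := S.hrecp m u
    have h2 := S.hrecp m v
    linear_combination ih + S.p (m + 1) v * h1 - S.p (m + 1) u * h2


lemma cd_pq (u v : ℂ) : ∀ n : ℕ,
    (u - v) * ∑ k ∈ range (n + 1), S.p k u * S.q k v =
      (S.a n : ℂ) * (S.p (n + 1) u * S.q n v - S.p n u * S.q (n + 1) v) + 1 := by
  intro n
  induction n with
  | zero =>
    rw [range_one, sum_singleton, S.hp0 u, S.hq0 v, S.hp1 u, S.hq1 v]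
    field_simp [ha' S 0]
    ring
  | succ m ih =>
    rw [Finset.sum_range_succ, mul_add]
    have h1 := S.hrecp m u
    have h2 := S.hrecq m v
    linear_combination ih + S.q (m + 1) v * h1 - S.p (m + 1) u * h2

lemma wronskian (v : ℂ) : ∀ n : ℕ,
    (S.a n : ℂ) * (S.q (n + 1) v * S.p n v - S.p (n + 1) v * S.q n v) = 1 := by
  intro n
  induction n with
  | zero =>
    rw [S.hp0 v, S.hq0 v, S.hq1 v]
    field_simp [ha' S 0]
    ring
  | succ m ih =>
    have h1 := S.hrecp (m) v
    have h2 := S.hrecq (m) v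
    have hne := ha' S (m + 1)
    -- a(m+1) * (q(m+2) p(m+1) - p(m+2) q(m+1)) = a m * (q(m+1) p m - p(m+1) q m)
    have key : (S.a (m + 1) : ℂ) * (S.q (m + 2) v * S.p (m + 1) v - S.p (m + 2) v * S.q (m + 1) v)
        = (S.a m : ℂ) * (S.q (m + 1) v * S.p m v - S.p (m + 1) v * S.q m v) := by
      linear_combination S.q (m + 1) v * h1 - S.p (m + 1) v * h2
    rw [key, ih]

lemma diff_eq (u v : ℂ) (n : ℕ) :
    S.p n u - S.p n v =
      (u - v) * ∑ k ∈ range n, (S.q n v * S.p k v - S.p n v * S.q k v) * S.p k u := by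
  cases n with
  | zero => simp [S.hp0]
  | succ m =>
    have hsum : ∑ k ∈ range (m + 1),
        (S.q (m + 1) v * S.p k v - S.p (m + 1) v * S.q k v) * S.p k u
        = S.q (m + 1) v * ∑ k ∈ range (m + 1), S.p k u * S.p k v
          - S.p (m + 1) v * ∑ k ∈ range (m + 1), S.p k u * S.q k v := by
      rw [Finset.mul_sum, Finset.mul_sum, ← Finset.sum_sub_distrib]
      exact Finset.sum_congr rfl fun k _ => by ring
    rw [hsum]
    have h1 := cd_pp S u v m
    have h2 := cd_pq S u v m
    have h3 := wronskian S v m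
    linear_combination S.p (m + 1) v * h2 - S.q (m + 1) v * h1 - S.p (m + 1) u * h3


lemma diff_p : ∀ n : ℕ, Differentiable ℂ (S.p n) ∧ Differentiable ℂ (S.p (n + 1)) := by
  intro n
  induction n with
  | zero =>
    constructor
    · have : S.p 0 = fun _ => (1 : ℂ) := funext S.hp0
      rw [this]; exact differentiable_const _
    · have : S.p 1 = fun z => (z - (S.b 0 : ℂ)) / (S.a 0 : ℂ) := funext S.hp1
      rw [this]
      exact (differentiable_id.sub_const _).div_const _
  | succ m ih =>
    refine ⟨ih.2, ?_⟩
    have hrw : S.p (m + 2) = fun z =>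
        ((z - (S.b (m + 1) : ℂ)) * S.p (m + 1) z - (S.a m : ℂ) * S.p m z) / (S.a (m + 1) : ℂ) := by
      funext z
      have h := S.hrecp m z
      field_simp [ha' S (m + 1)]
      linear_combination -h
    rw [hrw]
    exact (((differentiable_id.sub_const _).mul ih.2).sub (ih.1.const_mul _)).div_const _

lemma deriv_p_eq (v : ℂ) (n : ℕ) :
    deriv (S.p n) v = ∑ k ∈ range n, (S.q n v * S.p k v - S.p n v * S.q k v) * S.p k v := by
  set F : ℂ → ℂ := fun u => ∑ k ∈ range n, (S.q n v * S.p k v - S.p n v * S.q k v) * S.p k u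
    with hF
  have hFdiff : Differentiable ℂ F := by
    rw [hF]
    exact Differentiable.fun_sum fun k _ => (diff_p S k).1.const_mul _
  have hpeq : S.p n = fun u => S.p n v + (u - v) * F u := by
    funext u
    have := diff_eq S u v n
    linear_combination this
  have hd : HasDerivAt (fun u => S.p n v + (u - v) * F u)
      (0 + (1 * F v + (v - v) * deriv F v)) v := by
    exact (hasDerivAt_const v _).add
      (((hasDerivAt_id v).sub_const v).mul (hFdiff v).hasDerivAt)
  rw [hpeq]
  rw [hd.deriv]
  simp
  rfl


lemma sump (z : ℂ) : Summable fun n => ‖S.p n z‖ ^ 2 :=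
  (S.indet z).of_nonneg_of_le (fun n => by positivity)
    (fun n => le_add_of_nonneg_right (by positivity))

lemma sumq (z : ℂ) : Summable fun n => ‖S.q n z‖ ^ 2 :=
  (S.indet z).of_nonneg_of_le (fun n => by positivity)
    (fun n => le_add_of_nonneg_left (by positivity))

lemma bound (u v : ℂ) :
    Summable (fun n => ‖∑ k ∈ range n,
        (S.q n v * S.p k v - S.p n v * S.q k v) * S.p k u‖ ^ 2) ∧
    ∑' n, ‖∑ k ∈ range n, (S.q n v * S.p k v - S.p n v * S.q k v) * S.p k u‖ ^ 2 ≤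
      (∑' n, ‖S.p n u‖ ^ 2) * ((∑' n, ‖S.p n v‖ ^ 2) + (∑' n, ‖S.q n v‖ ^ 2)) ^ 2 := by
  set Pu2 := ∑' n, ‖S.p n u‖ ^ 2 with hPu2
  set Pv2 := ∑' n, ‖S.p n v‖ ^ 2 with hPv2
  set Qv2 := ∑' n, ‖S.q n v‖ ^ 2 with hQv2
  have hPu2n : 0 ≤ Pu2 := tsum_nonneg fun n => by positivity
  have hPv2n : 0 ≤ Pv2 := tsum_nonneg fun n => by positivity
  have hQv2n : 0 ≤ Qv2 := tsum_nonneg fun n => by positivity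
  -- pointwise bound
  have key : ∀ n : ℕ, ‖∑ k ∈ range n, (S.q n v * S.p k v - S.p n v * S.q k v) * S.p k u‖ ^ 2 ≤
      Pu2 * (Pv2 + Qv2) * (‖S.p n v‖ ^ 2 + ‖S.q n v‖ ^ 2) := by
    intro n
    have h1 : ‖∑ k ∈ range n, (S.q n v * S.p k v - S.p n v * S.q k v) * S.p k u‖ ≤
        ‖S.q n v‖ * (Real.sqrt Pv2 * Real.sqrt Pu2) +
          ‖S.p n v‖ * (Real.sqrt Qv2 * Real.sqrt Pu2) := by
      calc ‖∑ k ∈ range n, (S.q n v * S.p k v - S.p n v * S.q k v) * S.p k u‖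
          ≤ ∑ k ∈ range n, ‖(S.q n v * S.p k v - S.p n v * S.q k v) * S.p k u‖ :=
            norm_sum_le _ _
        _ ≤ ∑ k ∈ range n, (‖S.q n v‖ * ‖S.p k v‖ + ‖S.p n v‖ * ‖S.q k v‖) * ‖S.p k u‖ := by
            refine Finset.sum_le_sum fun k _ => ?_
            rw [norm_mul]
            refine mul_le_mul_of_nonneg_right ?_ (norm_nonneg _)
            calc ‖S.q n v * S.p k v - S.p n v * S.q k v‖
                ≤ ‖S.q n v * S.p k v‖ + ‖S.p n v * S.q k v‖ := norm_sub_le _ _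
              _ = ‖S.q n v‖ * ‖S.p k v‖ + ‖S.p n v‖ * ‖S.q k v‖ := by rw [norm_mul, norm_mul]
        _ = ‖S.q n v‖ * ∑ k ∈ range n, ‖S.p k v‖ * ‖S.p k u‖ +
              ‖S.p n v‖ * ∑ k ∈ range n, ‖S.q k v‖ * ‖S.p k u‖ := by
            rw [Finset.mul_sum, Finset.mul_sum, ← Finset.sum_add_distrib]
            exact Finset.sum_congr rfl fun k _ => by ring
        _ ≤ ‖S.q n v‖ * (Real.sqrt Pv2 * Real.sqrt Pu2) +
              ‖S.p n v‖ * (Real.sqrt Qv2 * Real.sqrt Pu2) := by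
            have cs1 : ∑ k ∈ range n, ‖S.p k v‖ * ‖S.p k u‖ ≤
                Real.sqrt Pv2 * Real.sqrt Pu2 := by
              refine (Real.sum_mul_le_sqrt_mul_sqrt _ _ _).trans ?_
              gcongr
              · exact Summable.sum_le_tsum _ (fun k _ => by positivity) (sump S v)
              · exact Summable.sum_le_tsum _ (fun k _ => by positivity) (sump S u)
            have cs2 : ∑ k ∈ range n, ‖S.q k v‖ * ‖S.p k u‖ ≤
                Real.sqrt Qv2 * Real.sqrt Pu2 := by
              refine (Real.sum_mul_le_sqrt_mul_sqrt _ _ _).trans ?_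
              gcongr
              · exact Summable.sum_le_tsum _ (fun k _ => by positivity) (sumq S v)
              · exact Summable.sum_le_tsum _ (fun k _ => by positivity) (sump S u)
            gcongr
    have h2 : (‖S.q n v‖ * (Real.sqrt Pv2 * Real.sqrt Pu2) +
          ‖S.p n v‖ * (Real.sqrt Qv2 * Real.sqrt Pu2)) ^ 2 ≤
        Pu2 * (Pv2 + Qv2) * (‖S.p n v‖ ^ 2 + ‖S.q n v‖ ^ 2) := by
      have e1 : Real.sqrt Pv2 ^ 2 = Pv2 := Real.sq_sqrt hPv2n
      have e2 : Real.sqrt Qv2 ^ 2 = Qv2 := Real.sq_sqrt hQv2n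
      have e3 : Real.sqrt Pu2 ^ 2 = Pu2 := Real.sq_sqrt hPu2n
      have hin : (‖S.q n v‖ * Real.sqrt Pv2 + ‖S.p n v‖ * Real.sqrt Qv2) ^ 2 ≤
          (‖S.p n v‖ ^ 2 + ‖S.q n v‖ ^ 2) * (Real.sqrt Pv2 ^ 2 + Real.sqrt Qv2 ^ 2) := by
        nlinarith [sq_nonneg (‖S.p n v‖ * Real.sqrt Pv2 - ‖S.q n v‖ * Real.sqrt Qv2)]
      calc (‖S.q n v‖ * (Real.sqrt Pv2 * Real.sqrt Pu2) +
            ‖S.p n v‖ * (Real.sqrt Qv2 * Real.sqrt Pu2)) ^ 2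
          = Real.sqrt Pu2 ^ 2 *
              (‖S.q n v‖ * Real.sqrt Pv2 + ‖S.p n v‖ * Real.sqrt Qv2) ^ 2 := by ring
        _ ≤ Real.sqrt Pu2 ^ 2 * ((‖S.p n v‖ ^ 2 + ‖S.q n v‖ ^ 2) *
              (Real.sqrt Pv2 ^ 2 + Real.sqrt Qv2 ^ 2)) :=
            mul_le_mul_of_nonneg_left hin (sq_nonneg _)
        _ = Pu2 * (Pv2 + Qv2) * (‖S.p n v‖ ^ 2 + ‖S.q n v‖ ^ 2) := by
            rw [e1, e2, e3]; ring
    calc ‖∑ k ∈ range n, (S.q n v * S.p k v - S.p n v * S.q k v) * S.p k u‖ ^ 2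
        ≤ (‖S.q n v‖ * (Real.sqrt Pv2 * Real.sqrt Pu2) +
            ‖S.p n v‖ * (Real.sqrt Qv2 * Real.sqrt Pu2)) ^ 2 := by
          apply pow_le_pow_left₀ (norm_nonneg _) h1 2
      _ ≤ _ := h2
  have hsummaj : Summable fun n =>
      Pu2 * (Pv2 + Qv2) * (‖S.p n v‖ ^ 2 + ‖S.q n v‖ ^ 2) := (S.indet v).mul_left _
  have hsum : Summable (fun n => ‖∑ k ∈ range n,
      (S.q n v * S.p k v - S.p n v * S.q k v) * S.p k u‖ ^ 2) :=
    hsummaj.of_nonneg_of_le (fun n => by positivity) key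
  refine ⟨hsum, ?_⟩
  calc ∑' n, ‖∑ k ∈ range n, (S.q n v * S.p k v - S.p n v * S.q k v) * S.p k u‖ ^ 2
      ≤ ∑' n, Pu2 * (Pv2 + Qv2) * (‖S.p n v‖ ^ 2 + ‖S.q n v‖ ^ 2) :=
        Summable.tsum_le_tsum key hsum hsummaj
    _ = Pu2 * (Pv2 + Qv2) * ∑' n, (‖S.p n v‖ ^ 2 + ‖S.q n v‖ ^ 2) := tsum_mul_left
    _ = Pu2 * (Pv2 + Qv2) * (Pv2 + Qv2) := by
        rw [Summable.tsum_add (sump S v) (sumq S v)]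
    _ = Pu2 * (Pv2 + Qv2) ^ 2 := by ring

end Stmt14Aux

/-- The difference-quotient bound
`∑ₙ |(pₙ(z) − pₙ(z₀))/(z − z₀)|² ≤ ‖𝔭_z‖²(‖𝔭_{z₀}‖² + ‖𝔮_{z₀}‖²)²`, and consequently
`∑ₙ |pₙ'(z₀)|² ≤ ‖𝔭_{z₀}‖²(‖𝔭_{z₀}‖² + ‖𝔮_{z₀}‖²)²`. -/
theorem stmt14 (S : JacobiSetup) (z z₀ : ℂ) (hz : z ≠ z₀) :
    (Summable (fun n => ‖(S.p n z - S.p n z₀) / (z - z₀)‖ ^ 2) ∧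
      ∑' n, ‖(S.p n z - S.p n z₀) / (z - z₀)‖ ^ 2 ≤
        (l2norm fun n => S.p n z) ^ 2 *
          ((l2norm fun n => S.p n z₀) ^ 2 + (l2norm fun n => S.q n z₀) ^ 2) ^ 2) ∧
    (Summable (fun n => ‖deriv (S.p n) z₀‖ ^ 2) ∧
      ∑' n, ‖deriv (S.p n) z₀‖ ^ 2 ≤
        (l2norm fun n => S.p n z₀) ^ 2 *
          ((l2norm fun n => S.p n z₀) ^ 2 + (l2norm fun n => S.q n z₀) ^ 2) ^ 2) := by
  classical
  open Finset Stmt14Aux in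
  have hzz : z - z₀ ≠ 0 := sub_ne_zero.2 hz
  have hL2p : ∀ w : ℂ, (l2norm fun n => S.p n w) ^ 2 = ∑' n, ‖S.p n w‖ ^ 2 := fun w =>
    Real.sq_sqrt (tsum_nonneg fun n => by positivity)
  have hL2q : ∀ w : ℂ, (l2norm fun n => S.q n w) ^ 2 = ∑' n, ‖S.q n w‖ ^ 2 := fun w =>
    Real.sq_sqrt (tsum_nonneg fun n => by positivity)
  constructor
  · have hfun : ∀ n : ℕ, (S.p n z - S.p n z₀) / (z - z₀) =
        ∑ k ∈ range n, (S.q n z₀ * S.p k z₀ - S.p n z₀ * S.q k z₀) * S.p k z := by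
      intro n
      rw [diff_eq S z z₀ n]
      field_simp
    have hcongr : (fun n => ‖(S.p n z - S.p n z₀) / (z - z₀)‖ ^ 2) =
        fun n => ‖∑ k ∈ range n,
          (S.q n z₀ * S.p k z₀ - S.p n z₀ * S.q k z₀) * S.p k z‖ ^ 2 := by
      funext n; rw [hfun n]
    rw [hcongr, hL2p z, hL2p z₀, hL2q z₀]
    exact bound S z z₀
  · have hcongr : (fun n => ‖deriv (S.p n) z₀‖ ^ 2) =
        fun n => ‖∑ k ∈ range n,
          (S.q n z₀ * S.p k z₀ - S.p n z₀ * S.q k z₀) * S.p k z₀‖ ^ 2 := by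
      funext n; rw [deriv_p_eq S z₀ n]
    rw [hcongr, hL2p z₀, hL2q z₀]
    exact bound S z₀ z₀
end
end

section
/- Let c ∈ ℓ² and z₀ ∈ ℂ. Define aₙₖ(z₀) := qₙ(z₀)pₖ(z₀) − pₙ(z₀)qₖ(z₀) and ξₖ := Σ_{n=k+1}^∞ cₙ·aₙₖ(z₀) for k ≥ 0 (the series converges absolutely). Then ξ := (ξₖ)ₖ ∈ ℓ² with ‖ξ‖ ≤ ‖c‖·(‖𝔭_{z₀}‖² + ‖𝔮_{z₀}‖²), and for all z ∈ ℂ, F_c(z) − F_c(z₀) = (z − z₀)·F_ξ(z). -/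
open Filter Topology MeasureTheory

noncomputable section

/-- The coefficients `a_{n,k}(z₀) = qₙ(z₀)pₖ(z₀) − pₙ(z₀)qₖ(z₀)`. -/
def coeffA (S : JacobiSetup) (z₀ : ℂ) (n k : ℕ) : ℂ :=
  S.q n z₀ * S.p k z₀ - S.p n z₀ * S.q k z₀

/-- The sequence `ξ(c,z₀)` with `ξₖ = ∑_{n≥k+1} cₙ a_{n,k}(z₀)`. -/
def xiSeq (S : JacobiSetup) (c : ℕ → ℂ) (z₀ : ℂ) (k : ℕ) : ℂ :=
  ∑' n : ℕ, c (k + 1 + n) * coeffA S z₀ (k + 1 + n) k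

/-- The entire function `F_c(z) = ∑ₙ cₙ pₙ(z)`. -/
def Ffun (S : JacobiSetup) (c : ℕ → ℂ) (z : ℂ) : ℂ := ∑' n, c n * S.p n z


namespace Stmt15Aux

lemma cs_summable {f g : ℕ → ℝ} (hf : Summable fun n => f n ^ 2)
    (hg : Summable fun n => g n ^ 2) (hf0 : ∀ n, 0 ≤ f n) (hg0 : ∀ n, 0 ≤ g n) :
    Summable fun n => f n * g n := by
  refine Summable.of_nonneg_of_le (fun n => mul_nonneg (hf0 n) (hg0 n)) (fun n => ?_)
    ((hf.add hg).div_const 2)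
  nlinarith [sq_nonneg (f n - g n)]

lemma cs_tsum_le {f g : ℕ → ℝ} (hf : Summable fun n => f n ^ 2)
    (hg : Summable fun n => g n ^ 2) (hf0 : ∀ n, 0 ≤ f n) (hg0 : ∀ n, 0 ≤ g n) :
    ∑' n, f n * g n ≤ Real.sqrt (∑' n, f n ^ 2) * Real.sqrt (∑' n, g n ^ 2) := by
  refine Summable.tsum_le_of_sum_le (cs_summable hf hg hf0 hg0) fun s => ?_
  have h1 : (∑ i ∈ s, f i * g i) ^ 2 ≤ (∑ i ∈ s, f i ^ 2) * (∑ i ∈ s, g i ^ 2) :=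
    Finset.sum_mul_sq_le_sq_mul_sq s f g
  have h2 : (∑ i ∈ s, f i ^ 2) ≤ ∑' n, f n ^ 2 := Summable.sum_le_tsum s (fun i _ => sq_nonneg _) hf
  have h3 : (∑ i ∈ s, g i ^ 2) ≤ ∑' n, g n ^ 2 := Summable.sum_le_tsum s (fun i _ => sq_nonneg _) hg
  have hs0 : 0 ≤ ∑ i ∈ s, f i * g i :=
    Finset.sum_nonneg fun i _ => mul_nonneg (hf0 i) (hg0 i)
  have hF : (0:ℝ) ≤ ∑' n, f n ^ 2 := tsum_nonneg fun _ => sq_nonneg _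
  have hG : (0:ℝ) ≤ ∑' n, g n ^ 2 := tsum_nonneg fun _ => sq_nonneg _
  have hs2 : (0:ℝ) ≤ ∑ i ∈ s, g i ^ 2 := Finset.sum_nonneg fun i _ => sq_nonneg _
  calc ∑ i ∈ s, f i * g i = Real.sqrt ((∑ i ∈ s, f i * g i) ^ 2) := (Real.sqrt_sq hs0).symm
    _ ≤ Real.sqrt ((∑' n, f n ^ 2) * (∑' n, g n ^ 2)) := by
        apply Real.sqrt_le_sqrt; nlinarith
    _ = _ := Real.sqrt_mul hF _

lemma summable_p_sq (S : JacobiSetup) (z : ℂ) : Summable fun n => ‖S.p n z‖ ^ 2 :=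
  (S.indet z).of_nonneg_of_le (fun _ => sq_nonneg _)
    (fun _ => le_add_of_nonneg_right (sq_nonneg _))

lemma summable_q_sq (S : JacobiSetup) (z : ℂ) : Summable fun n => ‖S.q n z‖ ^ 2 :=
  (S.indet z).of_nonneg_of_le (fun _ => sq_nonneg _)
    (fun _ => le_add_of_nonneg_left (sq_nonneg _))

lemma wronskian (S : JacobiSetup) (z : ℂ) :
    ∀ n, (S.a n : ℂ) * (S.q (n+1) z * S.p n z - S.p (n+1) z * S.q n z) = 1 := by
  intro n
  induction n with
  | zero =>
    have ha0 : (S.a 0 : ℂ) ≠ 0 := by exact_mod_cast (S.ha 0).ne'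
    rw [S.hp0, S.hq0, S.hq1]
    field_simp
    simp
  | succ n ih =>
    have key : (S.a (n+1) : ℂ) * (S.q (n+2) z * S.p (n+1) z - S.p (n+2) z * S.q (n+1) z)
        = (S.a n : ℂ) * (S.q (n+1) z * S.p n z - S.p (n+1) z * S.q n z) := by
      linear_combination (S.q (n+1) z) * S.hrecp n z - (S.p (n+1) z) * S.hrecq n z
    rw [key, ih]

lemma coeffA_self (S : JacobiSetup) (z₀ : ℂ) (n : ℕ) : coeffA S z₀ n n = 0 := by
  simp [coeffA]; ring

lemma coeffA_succ_self (S : JacobiSetup) (z₀ : ℂ) (n : ℕ) :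
    (S.a n : ℂ) * coeffA S z₀ n (n+1) = -1 := by
  unfold coeffA
  linear_combination -(wronskian S z₀ n)

lemma coeffA_rec (S : JacobiSetup) (z₀ : ℂ) (n k : ℕ) :
    (S.a (n+1) : ℂ) * coeffA S z₀ (n+2) k =
      (z₀ - (S.b (n+1) : ℂ)) * coeffA S z₀ (n+1) k - (S.a n : ℂ) * coeffA S z₀ n k := by
  unfold coeffA
  linear_combination (S.q k z₀) * S.hrecp n z₀ - (S.p k z₀) * S.hrecq n z₀

lemma main_id (S : JacobiSetup) (z₀ z : ℂ) :
    ∀ n, S.p n z - S.p n z₀ =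
      (z - z₀) * ∑ k ∈ Finset.range n, coeffA S z₀ n k * S.p k z := by
  intro n
  induction n using Nat.twoStepInduction with
  | zero => simp [S.hp0]
  | one =>
    have ha0 : (S.a 0 : ℂ) ≠ 0 := by exact_mod_cast (S.ha 0).ne'
    rw [S.hp1 z, S.hp1 z₀]
    simp only [Finset.sum_range_one, coeffA, S.hq1, S.hq0, S.hp0, S.hp1]
    field_simp
    ring
  | more n ih ih1 =>
    have ha : (S.a (n+1) : ℂ) ≠ 0 := by exact_mod_cast (S.ha (n+1)).ne'
    apply mul_left_cancel₀ ha
    have hsum : (S.a (n+1) : ℂ) * ∑ k ∈ Finset.range (n+2), coeffA S z₀ (n+2) k * S.p k z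
        = (z₀ - (S.b (n+1) : ℂ)) *
            (∑ k ∈ Finset.range (n+1), coeffA S z₀ (n+1) k * S.p k z)
          - (S.a n : ℂ) * (∑ k ∈ Finset.range n, coeffA S z₀ n k * S.p k z)
          + S.p (n+1) z := by
      rw [Finset.mul_sum]
      rw [Finset.sum_congr rfl (fun k _ => by
        linear_combination (S.p k z) * coeffA_rec S z₀ n k :
        ∀ k ∈ Finset.range (n+2), (S.a (n+1):ℂ) * (coeffA S z₀ (n+2) k * S.p k z)
          = (z₀ - (S.b (n+1) : ℂ)) * (coeffA S z₀ (n+1) k * S.p k z)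
            - (S.a n : ℂ) * (coeffA S z₀ n k * S.p k z))]
      rw [Finset.sum_sub_distrib, ← Finset.mul_sum, ← Finset.mul_sum]
      have e1 : ∑ k ∈ Finset.range (n+2), coeffA S z₀ (n+1) k * S.p k z
          = ∑ k ∈ Finset.range (n+1), coeffA S z₀ (n+1) k * S.p k z := by
        rw [Finset.sum_range_succ, coeffA_self, zero_mul, add_zero]
      have e2 : ∑ k ∈ Finset.range (n+2), coeffA S z₀ n k * S.p k z
          = (∑ k ∈ Finset.range n, coeffA S z₀ n k * S.p k z)
            + coeffA S z₀ n (n+1) * S.p (n+1) z := by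
        rw [Finset.sum_range_succ, Finset.sum_range_succ, coeffA_self, zero_mul, add_zero]
      rw [e1, e2]
      linear_combination -(S.p (n+1) z) * coeffA_succ_self S z₀ n
    linear_combination (S.hrecp n z₀) - (S.hrecp n z) - (z - z₀) * hsum
      + (z₀ - (S.b (n+1) : ℂ)) * ih1 - (S.a n : ℂ) * ih

end Stmt15Aux

/-- For `c ∈ ℓ²` and `z₀ ∈ ℂ`, the series defining `ξₖ` converge absolutely, `ξ ∈ ℓ²`
with `‖ξ‖ ≤ ‖c‖(‖𝔭_{z₀}‖² + ‖𝔮_{z₀}‖²)`, and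
`F_c(z) − F_c(z₀) = (z − z₀) F_ξ(z)` for all `z`. -/
theorem stmt15 (S : JacobiSetup) (c : ℕ → ℂ) (hc : Summable fun n => ‖c n‖ ^ 2) (z₀ : ℂ) :
    (∀ k, Summable fun n : ℕ => ‖c (k + 1 + n) * coeffA S z₀ (k + 1 + n) k‖) ∧
    (Summable fun k => ‖xiSeq S c z₀ k‖ ^ 2) ∧
    l2norm (xiSeq S c z₀) ≤
      l2norm c * ((l2norm fun n => S.p n z₀) ^ 2 + (l2norm fun n => S.q n z₀) ^ 2) ∧
    ∀ z : ℂ, Ffun S c z - Ffun S c z₀ = (z - z₀) * Ffun S (xiSeq S c z₀) z := by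
  classical
  open Stmt15Aux in
  have hP2 : Summable fun n => ‖S.p n z₀‖ ^ 2 := Stmt15Aux.summable_p_sq S z₀
  have hQ2 : Summable fun n => ‖S.q n z₀‖ ^ 2 := Stmt15Aux.summable_q_sq S z₀
  have hCP : Summable fun n => ‖c n‖ * ‖S.p n z₀‖ :=
    Stmt15Aux.cs_summable hc hP2 (fun _ => norm_nonneg _) (fun _ => norm_nonneg _)
  have hCQ : Summable fun n => ‖c n‖ * ‖S.q n z₀‖ :=
    Stmt15Aux.cs_summable hc hQ2 (fun _ => norm_nonneg _) (fun _ => norm_nonneg _)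
  have hinj : ∀ k : ℕ, Function.Injective (fun m : ℕ => k + 1 + m) := by
    intro k a b hab; simpa using hab
  have hcoeff : ∀ n k, ‖coeffA S z₀ n k‖ ≤
      ‖S.q n z₀‖ * ‖S.p k z₀‖ + ‖S.p n z₀‖ * ‖S.q k z₀‖ := fun n k => by
    simpa [coeffA, norm_mul] using norm_sub_le (S.q n z₀ * S.p k z₀) (S.p n z₀ * S.q k z₀)
  have hsQ : ∀ k : ℕ, Summable fun m : ℕ => ‖c (k+1+m)‖ * ‖S.q (k+1+m) z₀‖ :=
    fun k => hCQ.comp_injective (hinj k)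
  have hsP : ∀ k : ℕ, Summable fun m : ℕ => ‖c (k+1+m)‖ * ‖S.p (k+1+m) z₀‖ :=
    fun k => hCP.comp_injective (hinj k)
  -- the summable majorant for each k
  have hbk : ∀ k : ℕ, Summable fun m : ℕ =>
      ‖c (k+1+m)‖ * ‖S.q (k+1+m) z₀‖ * ‖S.p k z₀‖
        + ‖c (k+1+m)‖ * ‖S.p (k+1+m) z₀‖ * ‖S.q k z₀‖ := fun k =>
    ((hsQ k).mul_right _).add ((hsP k).mul_right _)
  have hle : ∀ k m : ℕ, ‖c (k+1+m) * coeffA S z₀ (k+1+m) k‖ ≤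
      ‖c (k+1+m)‖ * ‖S.q (k+1+m) z₀‖ * ‖S.p k z₀‖
        + ‖c (k+1+m)‖ * ‖S.p (k+1+m) z₀‖ * ‖S.q k z₀‖ := by
    intro k m
    rw [norm_mul]
    have h1 := hcoeff (k+1+m) k
    have h2 := mul_le_mul_of_nonneg_left h1 (norm_nonneg (c (k+1+m)))
    nlinarith [norm_nonneg (c (k+1+m))]
  have part1 : ∀ k, Summable fun n : ℕ => ‖c (k + 1 + n) * coeffA S z₀ (k + 1 + n) k‖ :=
    fun k => Summable.of_nonneg_of_le (fun _ => norm_nonneg _) (hle k) (hbk k)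
  -- constants
  set Cc : ℝ := l2norm c with hCcdef
  set Cp : ℝ := l2norm (fun n => S.p n z₀) with hCpdef
  set Cq : ℝ := l2norm (fun n => S.q n z₀) with hCqdef
  have hCc0 : 0 ≤ Cc := Real.sqrt_nonneg _
  have hCp0 : 0 ≤ Cp := Real.sqrt_nonneg _
  have hCq0 : 0 ≤ Cq := Real.sqrt_nonneg _
  have hCp2 : Cp ^ 2 = ∑' n, ‖S.p n z₀‖ ^ 2 :=
    Real.sq_sqrt (tsum_nonneg fun _ => sq_nonneg _)
  have hCq2 : Cq ^ 2 = ∑' n, ‖S.q n z₀‖ ^ 2 :=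
    Real.sq_sqrt (tsum_nonneg fun _ => sq_nonneg _)
  have hCQle : ∑' n, ‖c n‖ * ‖S.q n z₀‖ ≤ Cc * Cq :=
    Stmt15Aux.cs_tsum_le hc hQ2 (fun _ => norm_nonneg _) (fun _ => norm_nonneg _)
  have hCPle : ∑' n, ‖c n‖ * ‖S.p n z₀‖ ≤ Cc * Cp :=
    Stmt15Aux.cs_tsum_le hc hP2 (fun _ => norm_nonneg _) (fun _ => norm_nonneg _)
  have hshiftQ : ∀ k : ℕ, ∑' m : ℕ, ‖c (k+1+m)‖ * ‖S.q (k+1+m) z₀‖ ≤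
      ∑' n, ‖c n‖ * ‖S.q n z₀‖ := fun k =>
    Summable.tsum_le_tsum_of_inj _ (hinj k)
      (fun n _ => mul_nonneg (norm_nonneg _) (norm_nonneg _)) (fun m => le_rfl)
      (hsQ k) hCQ
  have hshiftP : ∀ k : ℕ, ∑' m : ℕ, ‖c (k+1+m)‖ * ‖S.p (k+1+m) z₀‖ ≤
      ∑' n, ‖c n‖ * ‖S.p n z₀‖ := fun k =>
    Summable.tsum_le_tsum_of_inj _ (hinj k)
      (fun n _ => mul_nonneg (norm_nonneg _) (norm_nonneg _)) (fun m => le_rfl)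
      (hsP k) hCP
  have hxi : ∀ k, ‖xiSeq S c z₀ k‖ ≤ Cc * Cq * ‖S.p k z₀‖ + Cc * Cp * ‖S.q k z₀‖ := by
    intro k
    have h0 : ‖xiSeq S c z₀ k‖ ≤ ∑' m, ‖c (k+1+m) * coeffA S z₀ (k+1+m) k‖ :=
      norm_tsum_le_tsum_norm (part1 k)
    have h1 : ∑' m, ‖c (k+1+m) * coeffA S z₀ (k+1+m) k‖ ≤
        ∑' m : ℕ, (‖c (k+1+m)‖ * ‖S.q (k+1+m) z₀‖ * ‖S.p k z₀‖
          + ‖c (k+1+m)‖ * ‖S.p (k+1+m) z₀‖ * ‖S.q k z₀‖) :=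
      Summable.tsum_le_tsum (hle k) (part1 k) (hbk k)
    have h2 : ∑' m : ℕ, (‖c (k+1+m)‖ * ‖S.q (k+1+m) z₀‖ * ‖S.p k z₀‖
          + ‖c (k+1+m)‖ * ‖S.p (k+1+m) z₀‖ * ‖S.q k z₀‖)
        = (∑' m : ℕ, ‖c (k+1+m)‖ * ‖S.q (k+1+m) z₀‖) * ‖S.p k z₀‖
          + (∑' m : ℕ, ‖c (k+1+m)‖ * ‖S.p (k+1+m) z₀‖) * ‖S.q k z₀‖ := by
      rw [Summable.tsum_add ((hsQ k).mul_right _) ((hsP k).mul_right _), tsum_mul_right,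
        tsum_mul_right]
    have h3 := (hshiftQ k).trans hCQle
    have h4 := (hshiftP k).trans hCPle
    have h5 := mul_le_mul_of_nonneg_right h3 (norm_nonneg (S.p k z₀))
    have h6 := mul_le_mul_of_nonneg_right h4 (norm_nonneg (S.q k z₀))
    linarith [h0, h1, h2.le, h2.ge]
  have part2 : Summable fun k => ‖xiSeq S c z₀ k‖ ^ 2 := by
    refine Summable.of_nonneg_of_le (fun k => sq_nonneg _) (fun k => ?_)
      ((hP2.mul_left (2 * (Cc * Cq) ^ 2)).add (hQ2.mul_left (2 * (Cc * Cp) ^ 2)))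
    have h1 := hxi k
    have h2 := norm_nonneg (xiSeq S c z₀ k)
    have hA : 0 ≤ Cc * Cq * ‖S.p k z₀‖ :=
      mul_nonneg (mul_nonneg hCc0 hCq0) (norm_nonneg _)
    have hB : 0 ≤ Cc * Cp * ‖S.q k z₀‖ :=
      mul_nonneg (mul_nonneg hCc0 hCp0) (norm_nonneg _)
    nlinarith [sq_nonneg (Cc * Cq * ‖S.p k z₀‖ - Cc * Cp * ‖S.q k z₀‖)]
  refine ⟨part1, part2, ?_, ?_⟩
  · -- the norm bound
    have hPQ : Summable fun k => ‖S.p k z₀‖ * ‖S.q k z₀‖ :=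
      Stmt15Aux.cs_summable hP2 hQ2 (fun _ => norm_nonneg _) (fun _ => norm_nonneg _)
    have hPQle : ∑' k, ‖S.p k z₀‖ * ‖S.q k z₀‖ ≤ Cp * Cq :=
      Stmt15Aux.cs_tsum_le hP2 hQ2 (fun _ => norm_nonneg _) (fun _ => norm_nonneg _)
    have hexp : Summable fun k => ((Cc * Cq) ^ 2 * ‖S.p k z₀‖ ^ 2
        + 2 * (Cc * Cq) * (Cc * Cp) * (‖S.p k z₀‖ * ‖S.q k z₀‖))
        + (Cc * Cp) ^ 2 * ‖S.q k z₀‖ ^ 2 :=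
      ((hP2.mul_left _).add (hPQ.mul_left _)).add (hQ2.mul_left _)
    have hexp' : Summable fun k => (Cc * Cq * ‖S.p k z₀‖ + Cc * Cp * ‖S.q k z₀‖) ^ 2 :=
      hexp.congr fun k => by ring
    have hstep : ∑' k, ‖xiSeq S c z₀ k‖ ^ 2 ≤
        ∑' k, (Cc * Cq * ‖S.p k z₀‖ + Cc * Cp * ‖S.q k z₀‖) ^ 2 :=
      Summable.tsum_le_tsum (fun k => by
        have := hxi k
        nlinarith [norm_nonneg (xiSeq S c z₀ k)]) part2 hexp'
    have hval : ∑' k, (Cc * Cq * ‖S.p k z₀‖ + Cc * Cp * ‖S.q k z₀‖) ^ 2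
        = (Cc * Cq) ^ 2 * (∑' k, ‖S.p k z₀‖ ^ 2)
          + 2 * (Cc * Cq) * (Cc * Cp) * (∑' k, ‖S.p k z₀‖ * ‖S.q k z₀‖)
          + (Cc * Cp) ^ 2 * (∑' k, ‖S.q k z₀‖ ^ 2) := by
      rw [tsum_congr (fun k => by ring :
        ∀ k, (Cc * Cq * ‖S.p k z₀‖ + Cc * Cp * ‖S.q k z₀‖) ^ 2
          = ((Cc * Cq) ^ 2 * ‖S.p k z₀‖ ^ 2
            + 2 * (Cc * Cq) * (Cc * Cp) * (‖S.p k z₀‖ * ‖S.q k z₀‖))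
            + (Cc * Cp) ^ 2 * ‖S.q k z₀‖ ^ 2)]
      rw [Summable.tsum_add ((hP2.mul_left _).add (hPQ.mul_left _)) (hQ2.mul_left _),
        Summable.tsum_add (hP2.mul_left _) (hPQ.mul_left _), tsum_mul_left, tsum_mul_left,
        tsum_mul_left]
    have hfin : ∑' k, ‖xiSeq S c z₀ k‖ ^ 2 ≤ (2 * (Cc * Cp * Cq)) ^ 2 := by
      have hPQ0 : (0:ℝ) ≤ ∑' k, ‖S.p k z₀‖ * ‖S.q k z₀‖ :=
        tsum_nonneg fun _ => mul_nonneg (norm_nonneg _) (norm_nonneg _)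
      nlinarith [hstep, hval, hCp2, hCq2, hPQle, mul_nonneg (mul_nonneg hCc0 hCc0)
        (mul_nonneg hCq0 hCp0)]
    have : l2norm (xiSeq S c z₀) ≤ 2 * (Cc * Cp * Cq) := by
      have := Real.sqrt_le_sqrt hfin
      rwa [Real.sqrt_sq (by positivity)] at this
    refine this.trans ?_
    nlinarith [mul_nonneg hCc0 (sq_nonneg (Cp - Cq))]
  · -- the functional identity
    intro z
    have hp2z : Summable fun n => ‖S.p n z‖ ^ 2 := Stmt15Aux.summable_p_sq S z
    have hCPz : Summable fun n => ‖c n‖ * ‖S.p n z‖ :=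
      Stmt15Aux.cs_summable hc hp2z (fun _ => norm_nonneg _) (fun _ => norm_nonneg _)
    have hs1 : Summable fun n => c n * S.p n z :=
      Summable.of_norm (hCPz.congr fun n => (norm_mul _ _).symm)
    have hs0 : Summable fun n => c n * S.p n z₀ :=
      Summable.of_norm (hCP.congr fun n => (norm_mul _ _).symm)
    set h : ℕ → ℕ → ℂ :=
      fun n k => if k < n then c n * coeffA S z₀ n k * S.p k z else 0 with hhdef
    have hPPz : Summable fun k => ‖S.p k z₀‖ * ‖S.p k z‖ :=
      Stmt15Aux.cs_summable hP2 hp2z (fun _ => norm_nonneg _) (fun _ => norm_nonneg _)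
    have hQPz : Summable fun k => ‖S.q k z₀‖ * ‖S.p k z‖ :=
      Stmt15Aux.cs_summable hQ2 hp2z (fun _ => norm_nonneg _) (fun _ => norm_nonneg _)
    have hBsum : Summable fun x : ℕ × ℕ =>
        (‖c x.1‖ * ‖S.q x.1 z₀‖) * (‖S.p x.2 z₀‖ * ‖S.p x.2 z‖)
          + (‖c x.1‖ * ‖S.p x.1 z₀‖) * (‖S.q x.2 z₀‖ * ‖S.p x.2 z‖) := by
      apply Summable.add
      · exact Summable.mul_of_nonneg (f := fun n => ‖c n‖ * ‖S.q n z₀‖)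
          (g := fun k => ‖S.p k z₀‖ * ‖S.p k z‖) hCQ hPPz
          (fun n => mul_nonneg (norm_nonneg _) (norm_nonneg _))
          (fun n => mul_nonneg (norm_nonneg _) (norm_nonneg _))
      · exact Summable.mul_of_nonneg (f := fun n => ‖c n‖ * ‖S.p n z₀‖)
          (g := fun k => ‖S.q k z₀‖ * ‖S.p k z‖) hCP hQPz
          (fun n => mul_nonneg (norm_nonneg _) (norm_nonneg _))
          (fun n => mul_nonneg (norm_nonneg _) (norm_nonneg _))
    have hnorm : ∀ x : ℕ × ℕ, ‖h x.1 x.2‖ ≤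
        (‖c x.1‖ * ‖S.q x.1 z₀‖) * (‖S.p x.2 z₀‖ * ‖S.p x.2 z‖)
          + (‖c x.1‖ * ‖S.p x.1 z₀‖) * (‖S.q x.2 z₀‖ * ‖S.p x.2 z‖) := by
      rintro ⟨n, k⟩
      by_cases hk : k < n
      · simp only [hhdef, if_pos hk]
        rw [norm_mul, norm_mul]
        have h1 := hcoeff n k
        have h2 := mul_le_mul_of_nonneg_left h1 (norm_nonneg (c n))
        have h3 := mul_le_mul_of_nonneg_right h2 (norm_nonneg (S.p k z))
        nlinarith [norm_nonneg (c n), norm_nonneg (S.p k z)]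
      · simp only [hhdef, if_neg hk, norm_zero]
        positivity
    have hSh : Summable fun x : ℕ × ℕ => h x.1 x.2 :=
      Summable.of_norm (hBsum.of_nonneg_of_le (fun _ => norm_nonneg _) hnorm)
    have hrow : ∀ n, Summable fun k => h n k := fun n =>
      summable_of_ne_finset_zero (s := Finset.range n)
        (fun k hk => if_neg (by simpa using hk))
    have hcol : ∀ k, Summable fun n => h n k := by
      intro k
      have hmaj : Summable fun n : ℕ =>
          (‖c n‖ * ‖S.q n z₀‖) * (‖S.p k z₀‖ * ‖S.p k z‖)
            + (‖c n‖ * ‖S.p n z₀‖) * (‖S.q k z₀‖ * ‖S.p k z‖) :=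
        (hCQ.mul_right _).add (hCP.mul_right _)
      exact Summable.of_norm
        (Summable.of_nonneg_of_le (fun _ => norm_nonneg _) (fun n => hnorm (n, k)) hmaj)
    have hcomm : ∑' k, ∑' n, h n k = ∑' n, ∑' k, h n k :=
      Summable.tsum_comm' hSh hrow hcol
    have hrowval : ∀ n, ∑' k, h n k
        = c n * ∑ k ∈ Finset.range n, coeffA S z₀ n k * S.p k z := by
      intro n
      rw [tsum_eq_sum (s := Finset.range n)
        (fun k hk => if_neg (by simpa using hk)), Finset.mul_sum]
      exact Finset.sum_congr rfl fun k hk => by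
        rw [if_pos (Finset.mem_range.mp hk)]; ring
    have hcolval : ∀ k, ∑' n, h n k = xiSeq S c z₀ k * S.p k z := by
      intro k
      have hsupp : Function.support (fun n => h n k) ⊆ Set.range (fun m : ℕ => k + 1 + m) := by
        intro n hn
        by_contra hcon
        have hkn : ¬ k < n := by
          intro hlt
          exact hcon ⟨n - (k + 1), by show k + 1 + (n - (k + 1)) = n; omega⟩
        exact hn (if_neg hkn)
      have heq := Function.Injective.tsum_eq (hinj k) (f := fun n => h n k) hsupp
      rw [← heq]
      have hterm : ∀ m : ℕ, h (k + 1 + m) k = c (k+1+m) * coeffA S z₀ (k+1+m) k * S.p k z :=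
        fun m => if_pos (by omega)
      rw [tsum_congr hterm, tsum_mul_right]
      rfl
    calc Ffun S c z - Ffun S c z₀
        = ∑' n, (c n * S.p n z - c n * S.p n z₀) := (Summable.tsum_sub hs1 hs0).symm
      _ = ∑' n, (z - z₀) * (c n * ∑ k ∈ Finset.range n, coeffA S z₀ n k * S.p k z) := by
          refine tsum_congr fun n => ?_
          rw [← mul_sub, Stmt15Aux.main_id S z₀ z n]; ring
      _ = (z - z₀) * ∑' n, (c n * ∑ k ∈ Finset.range n, coeffA S z₀ n k * S.p k z) :=
          tsum_mul_left
      _ = (z - z₀) * ∑' n, ∑' k, h n k := by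
          rw [tsum_congr fun n => (hrowval n).symm]
      _ = (z - z₀) * ∑' k, ∑' n, h n k := by rw [hcomm]
      _ = (z - z₀) * ∑' k, xiSeq S c z₀ k * S.p k z := by
          rw [tsum_congr hcolval]
      _ = (z - z₀) * Ffun S (xiSeq S c z₀) z := rfl
end
end

section
/- Fix z₀ ∈ ℂ and let Ξ_{z₀} : ℓ² → ℓ² be the bounded linear operator sending c to ξ(c, z₀), where ξ(c, z₀)ₖ := Σ_{n=k+1}^∞ cₙ·(qₙ(z₀)pₖ(z₀) − pₙ(z₀)qₖ(z₀)). Then: (a) for every c ∈ ℓ², Ξ_{z₀}(c) ∈ D(T) and (T − z₀)·Ξ_{z₀}(c) + F_c(z₀)·e₀ = c; (b) the range of Ξ_{z₀} equals D(T); (c) the kernel of Ξ_{z₀} equals ℂ·e₀; (d) for every v ∈ D(T), Ξ_{z₀}((T − z₀)v) = v, i.e., the restriction of Ξ_{z₀} to (T − z₀)(D(T)) is a bijection onto D(T) equal to (T − z₀)⁻¹. -/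
open Filter Topology MeasureTheory

noncomputable section

/-- The first standard basis vector `e₀` of `ℓ²`. -/
def e0 : ℕ → ℂ := fun n => if n = 0 then 1 else 0


open Filter Topology

lemma summable_mul_of_sq {x y : ℕ → ℂ}
    (hx : Summable fun n => ‖x n‖ ^ 2) (hy : Summable fun n => ‖y n‖ ^ 2) :
    Summable fun n => x n * y n := by
  refine Summable.of_norm (Summable.of_nonneg_of_le (fun n => norm_nonneg _) (fun n => ?_)
    ((hx.add hy).mul_left (1/2 : ℝ)))
  rw [norm_mul]
  nlinarith [norm_nonneg (x n), norm_nonneg (y n), sq_nonneg (‖x n‖ - ‖y n‖)]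

lemma tsum_cs {x y : ℕ → ℂ}
    (hx : Summable fun n => ‖x n‖ ^ 2) (hy : Summable fun n => ‖y n‖ ^ 2) :
    ‖∑' n, x n * y n‖ ≤ Real.sqrt (∑' n, ‖x n‖ ^ 2) * Real.sqrt (∑' n, ‖y n‖ ^ 2) := by
  have hs : Summable fun n => ‖x n * y n‖ := by
    refine Summable.of_nonneg_of_le (fun n => norm_nonneg _) (fun n => ?_)
      ((hx.add hy).mul_left (1/2 : ℝ))
    rw [norm_mul]
    nlinarith [norm_nonneg (x n), norm_nonneg (y n), sq_nonneg (‖x n‖ - ‖y n‖)]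
  refine le_trans (norm_tsum_le_tsum_norm hs) ?_
  refine Summable.tsum_le_of_sum_le hs fun s => ?_
  have h1 : (∑ i ∈ s, ‖x i * y i‖)^2 ≤ (∑ i ∈ s, ‖x i‖^2) * (∑ i ∈ s, ‖y i‖^2) := by
    simp_rw [norm_mul]
    exact Finset.sum_mul_sq_le_sq_mul_sq s _ _
  have h2 : (∑ i ∈ s, ‖x i‖^2) ≤ ∑' n, ‖x n‖^2 :=
    Summable.sum_le_tsum s (fun n _ => sq_nonneg _) hx
  have h3 : (∑ i ∈ s, ‖y i‖^2) ≤ ∑' n, ‖y n‖^2 :=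
    Summable.sum_le_tsum s (fun n _ => sq_nonneg _) hy
  have h4 : 0 ≤ ∑ i ∈ s, ‖x i * y i‖ := Finset.sum_nonneg fun i _ => norm_nonneg _
  have h5 : 0 ≤ (∑ i ∈ s, ‖y i‖^2) := Finset.sum_nonneg fun i _ => sq_nonneg _
  have h6 : 0 ≤ (∑' n, ‖x n‖^2) := tsum_nonneg fun n => sq_nonneg _
  have h7 : 0 ≤ (∑' n, ‖y n‖^2) := tsum_nonneg fun n => sq_nonneg _
  nlinarith [Real.sq_sqrt h6, Real.sq_sqrt h7, Real.sqrt_nonneg (∑' n, ‖x n‖^2),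
    Real.sqrt_nonneg (∑' n, ‖y n‖^2), mul_le_mul_of_nonneg_left h3 h6,
    mul_le_mul_of_nonneg_right h2 h5,
    mul_nonneg (Real.sqrt_nonneg (∑' n, ‖x n‖^2)) (Real.sqrt_nonneg (∑' n, ‖y n‖^2))]

-- tail of a nonneg summable is ≤ total
lemma tsum_shift_le {f : ℕ → ℝ} (hf : Summable f) (h0 : ∀ n, 0 ≤ f n) (m : ℕ) :
    ∑' n, f (m + n) ≤ ∑' n, f n := by
  have h := Summable.sum_add_tsum_nat_add (f := f) m hf
  have h2 : 0 ≤ ∑ i ∈ Finset.range m, f i := Finset.sum_nonneg fun i _ => h0 i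
  simp_rw [add_comm m _]
  linarith

lemma summable_shift {f : ℕ → ℂ} (hf : Summable f) (m : ℕ) :
    Summable fun n => f (m + n) := by
  simpa [add_comm] using (summable_nat_add_iff m).2 hf

lemma summable_shift_real {f : ℕ → ℝ} (hf : Summable f) (m : ℕ) :
    Summable fun n => f (m + n) := by
  simpa [add_comm] using (summable_nat_add_iff m).2 hf

-- ℓ² convergence implies pointwise convergence
lemma pointwise_of_l2 {u : ℕ → ℕ → ℂ} {f : ℕ → ℂ}
    (hs : ∀ k, Summable fun n => ‖u k n - f n‖ ^ 2)
    (ht : Tendsto (fun k => ∑' n, ‖u k n - f n‖ ^ 2) atTop (𝓝 0)) (n : ℕ) :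
    Tendsto (fun k => u k n) atTop (𝓝 (f n)) := by
  have h1 : Tendsto (fun k => ‖u k n - f n‖ ^ 2) atTop (𝓝 0) := by
    refine squeeze_zero (fun k => sq_nonneg _) (fun k => ?_) ht
    exact Summable.le_tsum (hs k) n (fun j _ => sq_nonneg _)
  have h2 : Tendsto (fun k => ‖u k n - f n‖) atTop (𝓝 0) := by
    have := (Real.continuous_sqrt.tendsto 0).comp h1
    simp only [Function.comp_def, Real.sqrt_zero] at this
    exact this.congr fun k => Real.sqrt_sq (norm_nonneg _)
  rw [tendsto_iff_norm_sub_tendsto_zero]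
  exact h2

-- squared-triangle bound for sums of two
lemma summable_sq_two {x y : ℕ → ℂ}
    (hx : Summable fun n => ‖x n‖ ^ 2) (hy : Summable fun n => ‖y n‖ ^ 2) :
    Summable (fun n => ‖x n + y n‖ ^ 2) := by
  refine Summable.of_nonneg_of_le (fun n => sq_nonneg _) (fun n => ?_)
    (((hx.add hy)).mul_left 2)
  have := norm_add_le (x n) (y n)
  nlinarith [norm_nonneg (x n), norm_nonneg (y n), norm_nonneg (x n + y n),
    sq_nonneg (‖x n‖ - ‖y n‖)]

lemma tsum_sq_two_le {x y : ℕ → ℂ}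
    (hx : Summable fun n => ‖x n‖ ^ 2) (hy : Summable fun n => ‖y n‖ ^ 2) :
    ∑' n, ‖x n + y n‖ ^ 2 ≤ 2 * ((∑' n, ‖x n‖ ^ 2) + ∑' n, ‖y n‖ ^ 2) := by
  have h := Summable.tsum_le_tsum (f := fun n => ‖x n + y n‖^2)
    (g := fun n => 2 * (‖x n‖^2 + ‖y n‖^2)) (fun n => by
      show ‖x n + y n‖^2 ≤ 2 * (‖x n‖^2 + ‖y n‖^2)
      have := norm_add_le (x n) (y n)
      nlinarith [norm_nonneg (x n), norm_nonneg (y n), norm_nonneg (x n + y n),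
        sq_nonneg (‖x n‖ - ‖y n‖)])
    (summable_sq_two hx hy) ((hx.add hy).mul_left 2)
  calc ∑' n, ‖x n + y n‖ ^ 2 ≤ ∑' n, 2 * (‖x n‖^2 + ‖y n‖^2) := h
    _ = 2 * ((∑' n, ‖x n‖ ^ 2) + ∑' n, ‖y n‖ ^ 2) := by
        rw [tsum_mul_left, Summable.tsum_add hx hy]

lemma summable_sq_smul {x : ℕ → ℂ} (a : ℂ)
    (hx : Summable fun n => ‖x n‖ ^ 2) : Summable (fun n => ‖a * x n‖ ^ 2) := by
  simp_rw [norm_mul, mul_pow]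
  exact hx.mul_left _

lemma tsum_sq_smul {x : ℕ → ℂ} (a : ℂ) :
    ∑' n, ‖a * x n‖ ^ 2 = ‖a‖^2 * ∑' n, ‖x n‖ ^ 2 := by
  simp_rw [norm_mul, mul_pow]
  exact tsum_mul_left
namespace Stmt16Aux
variable (S : JacobiSetup) (z₀ : ℂ)

lemma summable_p_sq : Summable fun n => ‖S.p n z₀‖ ^ 2 :=
  Summable.of_nonneg_of_le (fun n => sq_nonneg _)
    (fun n => le_add_of_nonneg_right (sq_nonneg _)) (S.indet z₀)

lemma summable_q_sq : Summable fun n => ‖S.q n z₀‖ ^ 2 :=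
  Summable.of_nonneg_of_le (fun n => sq_nonneg _)
    (fun n => le_add_of_nonneg_left (sq_nonneg _)) (S.indet z₀)

/-- bound on the `k`-th row of the kernel -/
def rowBound (k : ℕ) : ℝ :=
  2 * ((∑' n, ‖S.q n z₀‖^2) * ‖S.p k z₀‖^2 + (∑' n, ‖S.p n z₀‖^2) * ‖S.q k z₀‖^2)

lemma rowBound_nonneg (k : ℕ) : 0 ≤ rowBound S z₀ k := by
  have h1 : (0:ℝ) ≤ ∑' n, ‖S.q n z₀‖^2 := tsum_nonneg fun n => sq_nonneg _
  have h2 : (0:ℝ) ≤ ∑' n, ‖S.p n z₀‖^2 := tsum_nonneg fun n => sq_nonneg _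
  unfold rowBound
  positivity

lemma summable_rowBound : Summable (rowBound S z₀) := by
  unfold rowBound
  exact (((summable_p_sq S z₀).mul_left _).add ((summable_q_sq S z₀).mul_left _)).mul_left 2

lemma coeffA_sq_le (n k : ℕ) :
    ‖coeffA S z₀ n k‖^2 ≤ 2 * (‖S.q n z₀‖^2 * ‖S.p k z₀‖^2 + ‖S.p n z₀‖^2 * ‖S.q k z₀‖^2) := by
  have h : ‖coeffA S z₀ n k‖ ≤ ‖S.q n z₀‖ * ‖S.p k z₀‖ + ‖S.p n z₀‖ * ‖S.q k z₀‖ := by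
    unfold coeffA
    refine (norm_sub_le _ _).trans ?_
    simp [norm_mul]
  nlinarith [norm_nonneg (coeffA S z₀ n k), sq_nonneg (‖S.q n z₀‖ * ‖S.p k z₀‖ - ‖S.p n z₀‖ * ‖S.q k z₀‖),
    mul_nonneg (norm_nonneg (S.q n z₀)) (norm_nonneg (S.p k z₀)),
    mul_nonneg (norm_nonneg (S.p n z₀)) (norm_nonneg (S.q k z₀))]

lemma summable_coeffA_sq (k : ℕ) : Summable fun n => ‖coeffA S z₀ n k‖^2 := by
  refine Summable.of_nonneg_of_le (fun n => sq_nonneg _) (fun n => coeffA_sq_le S z₀ n k) ?_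
  exact (((summable_q_sq S z₀).mul_right _).add ((summable_p_sq S z₀).mul_right _)).mul_left 2

lemma tsum_coeffA_sq_le (k : ℕ) : ∑' n, ‖coeffA S z₀ n k‖^2 ≤ rowBound S z₀ k := by
  have h := Summable.tsum_le_tsum (fun n => coeffA_sq_le S z₀ n k) (summable_coeffA_sq S z₀ k)
    ((((summable_q_sq S z₀).mul_right _).add ((summable_p_sq S z₀).mul_right _)).mul_left 2)
  refine h.trans_eq ?_
  unfold rowBound
  rw [tsum_mul_left, Summable.tsum_add ((summable_q_sq S z₀).mul_right _) ((summable_p_sq S z₀).mul_right _),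
    tsum_mul_right, tsum_mul_right]

lemma coeffA_diag (n : ℕ) : coeffA S z₀ n n = 0 := by unfold coeffA; ring

lemma wronskian : ∀ n, (S.a n : ℂ) * coeffA S z₀ (n+1) n = 1 := by
  intro n
  induction n with
  | zero =>
    unfold coeffA
    rw [S.hp0, S.hq0, S.hp1, S.hq1]
    have ha0 : (S.a 0 : ℂ) ≠ 0 := by exact_mod_cast (S.ha 0).ne'
    field_simp
    ring
  | succ n ih =>
    unfold coeffA at ih ⊢
    linear_combination (S.q (n+1) z₀) * S.hrecp n z₀ - (S.p (n+1) z₀) * S.hrecq n z₀ + ih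

lemma rec_snd (n k : ℕ) : z₀ * coeffA S z₀ n (k+1) =
    (S.a (k+1):ℂ) * coeffA S z₀ n (k+2) + (S.b (k+1):ℂ) * coeffA S z₀ n (k+1)
      + (S.a k:ℂ) * coeffA S z₀ n k := by
  unfold coeffA
  linear_combination (S.q n z₀) * S.hrecp k z₀ - (S.p n z₀) * S.hrecq k z₀

lemma rec_snd0 (n : ℕ) : (S.b 0:ℂ) * coeffA S z₀ n 0 + (S.a 0:ℂ) * coeffA S z₀ n 1 =
    z₀ * coeffA S z₀ n 0 - S.p n z₀ := by
  unfold coeffA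
  rw [S.hp0, S.hq0, S.hp1, S.hq1]
  have ha0 : (S.a 0 : ℂ) ≠ 0 := by exact_mod_cast (S.ha 0).ne'
  field_simp
  ring

lemma rec_fst (n k : ℕ) : z₀ * coeffA S z₀ (n+1) k =
    (S.a (n+1):ℂ) * coeffA S z₀ (n+2) k + (S.b (n+1):ℂ) * coeffA S z₀ (n+1) k
      + (S.a n:ℂ) * coeffA S z₀ n k := by
  unfold coeffA
  linear_combination (S.p k z₀) * S.hrecq n z₀ - (S.q k z₀) * S.hrecp n z₀

end Stmt16Aux
namespace Stmt16Aux
variable (S : JacobiSetup) (z₀ : ℂ)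

/-- tail sums defining `ξ`. -/
def tailSum (c : ℕ → ℂ) (m k : ℕ) : ℂ := ∑' n, c (m + n) * coeffA S z₀ (m + n) k

lemma xiSeq_eq_tail (c : ℕ → ℂ) (k : ℕ) : xiSeq S c z₀ k = tailSum S z₀ c (k+1) k := rfl

variable {c d : ℕ → ℂ}

lemma summable_cA (hc : Summable fun n => ‖c n‖^2) (m k : ℕ) :
    Summable fun n => c (m + n) * coeffA S z₀ (m + n) k :=
  summable_mul_of_sq (summable_shift_real hc m)
    (summable_shift_real (summable_coeffA_sq S z₀ k) m)

lemma tail_peel (hc : Summable fun n => ‖c n‖^2) (m k : ℕ) :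
    tailSum S z₀ c m k = c m * coeffA S z₀ m k + tailSum S z₀ c (m+1) k := by
  unfold tailSum
  rw [Summable.tsum_eq_zero_add (summable_cA S z₀ hc m k)]
  simp only [add_zero]
  congr 1
  exact tsum_congr fun n => by rw [show m + (n+1) = m + 1 + n by omega]

lemma xi_sq_le (hc : Summable fun n => ‖c n‖^2) (k : ℕ) :
    ‖xiSeq S c z₀ k‖^2 ≤ (∑' n, ‖c n‖^2) * rowBound S z₀ k := by
  have hcs : Summable fun n => ‖c (k+1+n)‖^2 := summable_shift_real hc (k+1)
  have hAs : Summable fun n => ‖coeffA S z₀ (k+1+n) k‖^2 :=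
    summable_shift_real (summable_coeffA_sq S z₀ k) (k+1)
  have h := tsum_cs (x := fun n => c (k+1+n)) (y := fun n => coeffA S z₀ (k+1+n) k) hcs hAs
  have h1 : (∑' n, ‖c (k+1+n)‖^2) ≤ ∑' n, ‖c n‖^2 :=
    tsum_shift_le hc (fun n => sq_nonneg _) (k+1)
  have h2 : (∑' n, ‖coeffA S z₀ (k+1+n) k‖^2) ≤ rowBound S z₀ k :=
    (tsum_shift_le (summable_coeffA_sq S z₀ k) (fun n => sq_nonneg _) (k+1)).trans
      (tsum_coeffA_sq_le S z₀ k)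
  have h3 : (0:ℝ) ≤ ∑' n, ‖c (k+1+n)‖^2 := tsum_nonneg fun n => sq_nonneg _
  have h4 : (0:ℝ) ≤ ∑' n, ‖coeffA S z₀ (k+1+n) k‖^2 := tsum_nonneg fun n => sq_nonneg _
  have h5 : ‖xiSeq S c z₀ k‖^2 ≤ (∑' n, ‖c (k+1+n)‖^2) * (∑' n, ‖coeffA S z₀ (k+1+n) k‖^2) := by
    have hnn : (0:ℝ) ≤ ‖xiSeq S c z₀ k‖ := norm_nonneg _
    calc ‖xiSeq S c z₀ k‖^2
        ≤ (Real.sqrt (∑' n, ‖c (k+1+n)‖^2) * Real.sqrt (∑' n, ‖coeffA S z₀ (k+1+n) k‖^2))^2 := by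
          apply pow_le_pow_left₀ hnn h
      _ = (∑' n, ‖c (k+1+n)‖^2) * (∑' n, ‖coeffA S z₀ (k+1+n) k‖^2) := by
          rw [mul_pow, Real.sq_sqrt h3, Real.sq_sqrt h4]
  refine h5.trans ?_
  exact mul_le_mul h1 h2 h4 (tsum_nonneg fun n => sq_nonneg _)

lemma summable_xi_sq (hc : Summable fun n => ‖c n‖^2) :
    Summable fun k => ‖xiSeq S c z₀ k‖^2 :=
  Summable.of_nonneg_of_le (fun k => sq_nonneg _) (fun k => xi_sq_le S z₀ hc k)
    ((summable_rowBound S z₀).mul_left _)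

lemma tsum_xi_sq_le (hc : Summable fun n => ‖c n‖^2) :
    ∑' k, ‖xiSeq S c z₀ k‖^2 ≤ (∑' n, ‖c n‖^2) * ∑' k, rowBound S z₀ k := by
  have := Summable.tsum_le_tsum (fun k => xi_sq_le S z₀ hc k) (summable_xi_sq S z₀ hc)
    ((summable_rowBound S z₀).mul_left _)
  simpa [tsum_mul_left] using this

lemma xi_sub (hc : Summable fun n => ‖c n‖^2) (hd : Summable fun n => ‖d n‖^2) (k : ℕ) :
    xiSeq S (fun n => c n - d n) z₀ k = xiSeq S c z₀ k - xiSeq S d z₀ k := by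
  unfold xiSeq
  simp_rw [sub_mul]
  exact Summable.tsum_sub (summable_cA S z₀ hc (k+1) k) (summable_cA S z₀ hd (k+1) k)

lemma summable_sub_sq (hc : Summable fun n => ‖c n‖^2) (hd : Summable fun n => ‖d n‖^2) :
    Summable fun n => ‖c n - d n‖^2 := by
  have := summable_sq_two (x := c) (y := fun n => -d n) hc (by simpa using hd)
  simpa [sub_eq_add_neg] using this

end Stmt16Aux
namespace Stmt16Aux
variable (S : JacobiSetup) (z₀ : ℂ) {c d : ℕ → ℂ}

/-- tail sums of `∑ cₙ pₙ`. -/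
def tailP (c : ℕ → ℂ) (m : ℕ) : ℂ := ∑' n, c (m + n) * S.p (m + n) z₀

lemma summable_cp (hc : Summable fun n => ‖c n‖^2) (m : ℕ) :
    Summable fun n => c (m + n) * S.p (m + n) z₀ :=
  summable_mul_of_sq (summable_shift_real hc m)
    (summable_shift_real (summable_p_sq S z₀) m)

lemma tailP_peel (hc : Summable fun n => ‖c n‖^2) (m : ℕ) :
    tailP S z₀ c m = c m * S.p m z₀ + tailP S z₀ c (m+1) := by
  unfold tailP
  rw [Summable.tsum_eq_zero_add (summable_cp S z₀ hc m)]
  simp only [add_zero]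
  congr 1
  exact tsum_congr fun n => by rw [show m + (n+1) = m + 1 + n by omega]

lemma Ffun_eq_tailP : Ffun S c z₀ = tailP S z₀ c 0 :=
  tsum_congr fun n => by rw [Nat.zero_add]

lemma tail_combine (hc : Summable fun n => ‖c n‖^2) (m k : ℕ) :
    (S.a k : ℂ) * tailSum S z₀ c m k + (S.b (k+1) : ℂ) * tailSum S z₀ c m (k+1)
      + (S.a (k+1) : ℂ) * tailSum S z₀ c m (k+2) = z₀ * tailSum S z₀ c m (k+1) := by
  have h1 := summable_cA S z₀ hc m k
  have h2 := summable_cA S z₀ hc m (k+1)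
  have h3 := summable_cA S z₀ hc m (k+2)
  unfold tailSum
  rw [← tsum_mul_left, ← tsum_mul_left, ← tsum_mul_left, ← tsum_mul_left,
    ← Summable.tsum_add (h1.mul_left _) (h2.mul_left _),
    ← Summable.tsum_add ((h1.mul_left _).add (h2.mul_left _)) (h3.mul_left _)]
  exact tsum_congr fun n => by linear_combination (-(c (m+n))) * rec_snd S z₀ (m+n) k

lemma tail_combine0 (hc : Summable fun n => ‖c n‖^2) (m : ℕ) :
    (S.b 0 : ℂ) * tailSum S z₀ c m 0 + (S.a 0 : ℂ) * tailSum S z₀ c m 1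
      = z₀ * tailSum S z₀ c m 0 - tailP S z₀ c m := by
  have h1 := summable_cA S z₀ hc m 0
  have h2 := summable_cA S z₀ hc m 1
  have hP := summable_cp S z₀ hc m
  unfold tailSum tailP
  rw [← tsum_mul_left, ← tsum_mul_left, ← tsum_mul_left,
    ← Summable.tsum_add (h1.mul_left _) (h2.mul_left _),
    ← Summable.tsum_sub (h1.mul_left _) hP]
  exact tsum_congr fun n => by linear_combination (c (m+n)) * rec_snd0 S z₀ (m+n)

lemma jmul_xi (hc : Summable fun n => ‖c n‖ ^ 2) (k : ℕ) :
    jacobiMul S.a S.b (xiSeq S c z₀) k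
      = z₀ * xiSeq S c z₀ k + c k - Ffun S c z₀ * e0 k := by
  cases k with
  | zero =>
    show (S.b 0 : ℂ) * xiSeq S c z₀ 0 + (S.a 0 : ℂ) * xiSeq S c z₀ 1
      = z₀ * xiSeq S c z₀ 0 + c 0 - Ffun S c z₀ * e0 0
    have h10 : (S.b 0:ℂ) * coeffA S z₀ 1 0 = z₀ * coeffA S z₀ 1 0 - S.p 1 z₀ := by
      have h := rec_snd0 S z₀ 1
      rw [coeffA_diag S z₀ 1] at h
      linear_combination h
    have hF : Ffun S c z₀ = c 0 * S.p 0 z₀ + (c 1 * S.p 1 z₀ + tailP S z₀ c 2) := by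
      rw [Ffun_eq_tailP S z₀, tailP_peel S z₀ hc 0, tailP_peel S z₀ hc 1]
    have hcomb := tail_combine0 S z₀ hc 2
    have hp0 := S.hp0 z₀
    have he0 : e0 0 = 1 := by simp [e0]
    rw [he0, hF, hp0,
      xiSeq_eq_tail S z₀ c 0, xiSeq_eq_tail S z₀ c 1]
    simp only [show (0:ℕ)+1 = 1 from rfl, show (1:ℕ)+1 = 2 from rfl]
    rw [tail_peel S z₀ hc 1 0]
    simp only [show (1:ℕ)+1 = 2 from rfl]
    linear_combination hcomb + c 1 * h10
  | succ k =>
    show (S.a k : ℂ) * xiSeq S c z₀ k + (S.b (k+1) : ℂ) * xiSeq S c z₀ (k+1)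
        + (S.a (k+1) : ℂ) * xiSeq S c z₀ (k+2)
      = z₀ * xiSeq S c z₀ (k+1) + c (k+1) - Ffun S c z₀ * e0 (k+1)
    have he0 : e0 (k+1) = 0 := by simp [e0]
    have hcomb := tail_combine S z₀ hc (k+3) k
    have hw := wronskian S z₀ k
    have h2 : (S.a k:ℂ) * coeffA S z₀ (k+2) k + (S.b (k+1):ℂ) * coeffA S z₀ (k+2) (k+1)
        = z₀ * coeffA S z₀ (k+2) (k+1) := by
      have h := rec_snd S z₀ (k+2) k
      rw [coeffA_diag S z₀ (k+2)] at h
      linear_combination -h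
    rw [he0, xiSeq_eq_tail S z₀ c k, xiSeq_eq_tail S z₀ c (k+1), xiSeq_eq_tail S z₀ c (k+2)]
    simp only [show k+1+1 = k+2 from rfl, show k+2+1 = k+3 from rfl]
    rw [tail_peel S z₀ hc (k+1) k]
    simp only [show k+1+1 = k+2 from rfl]
    rw [tail_peel S z₀ hc (k+2) k, tail_peel S z₀ hc (k+2) (k+1)]
    simp only [show k+2+1 = k+3 from rfl]
    linear_combination hcomb + c (k+1) * hw + c (k+2) * h2

end Stmt16Aux
namespace Stmt16Aux

lemma support_bound {w : ℕ → ℂ} (hw : (Function.support w).Finite) :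
    ∃ N, ∀ n, N ≤ n → w n = 0 := by
  obtain ⟨N, hN⟩ := hw.bddAbove
  refine ⟨N + 1, fun n hn => ?_⟩
  by_contra h
  have := hN (Function.mem_support.2 h)
  omega

lemma finite_of_bound {w : ℕ → ℂ} (N : ℕ) (h : ∀ n, N ≤ n → w n = 0) :
    (Function.support w).Finite := by
  refine Set.Finite.subset (Set.finite_Iio N) fun n hn => ?_
  by_contra hlt
  exact hn (h n (by simpa [Set.mem_Iio, Nat.not_lt] using hlt))

lemma fin_supp_summable_sq {w : ℕ → ℂ} (hw : (Function.support w).Finite) :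
    Summable fun n => ‖w n‖ ^ 2 := by
  refine summable_of_ne_finset_zero (s := hw.toFinset) fun n hn => ?_
  have : w n = 0 := by
    by_contra h
    exact hn (by simpa using h)
  simp [this]

lemma jacobiMul_support (a b : ℕ → ℝ) {w : ℕ → ℂ} (hw : (Function.support w).Finite) :
    (Function.support (jacobiMul a b w)).Finite := by
  obtain ⟨N, hN⟩ := support_bound hw
  refine finite_of_bound (N + 1) fun n hn => ?_
  match n, hn with
  | n + 1, hn =>
    show (a n : ℂ) * w n + (b (n + 1) : ℂ) * w (n + 1) + (a (n + 1) : ℂ) * w (n + 2) = 0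
    rw [hN n (by omega), hN (n+1) (by omega), hN (n+2) (by omega)]
    ring

lemma jacobiMul_zero_fun (a b : ℕ → ℝ) (n : ℕ) : jacobiMul a b (fun _ => (0:ℂ)) n = 0 := by
  cases n <;> simp [jacobiMul]

lemma graph_sq_f {a b : ℕ → ℝ} {f g : ℕ → ℂ} (h : jacobiGraph a b f g) :
    Summable fun n => ‖f n‖ ^ 2 := by
  obtain ⟨u, hfin, hS1, -, -, -⟩ := h
  have h1 : Summable fun n => ‖u 0 n‖ ^ 2 := fin_supp_summable_sq (hfin 0)
  have h2 : Summable fun n => ‖-(u 0 n - f n)‖ ^ 2 :=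
    (hS1 0).congr fun n => by rw [norm_neg]
  exact (summable_sq_two h1 h2).congr fun n => by rw [show u 0 n + -(u 0 n - f n) = f n by ring]

lemma graph_sq_g {a b : ℕ → ℝ} {f g : ℕ → ℂ} (h : jacobiGraph a b f g) :
    Summable fun n => ‖g n‖ ^ 2 := by
  obtain ⟨u, hfin, -, -, hS2, -⟩ := h
  have h1 : Summable fun n => ‖jacobiMul a b (u 0) n‖ ^ 2 :=
    fin_supp_summable_sq (jacobiMul_support a b (hfin 0))
  have h2 : Summable fun n => ‖-(jacobiMul a b (u 0) n - g n)‖ ^ 2 :=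
    (hS2 0).congr fun n => by rw [norm_neg]
  exact (summable_sq_two h1 h2).congr fun n => by
    rw [show jacobiMul a b (u 0) n + -(jacobiMul a b (u 0) n - g n) = g n by ring]

end Stmt16Aux
namespace Stmt16Aux
variable (S : JacobiSetup) (z₀ : ℂ) {c d : ℕ → ℂ}

lemma Ffun_sub_sq_le (hc : Summable fun n => ‖c n‖^2) (hd : Summable fun n => ‖d n‖^2) :
    ‖Ffun S c z₀ - Ffun S d z₀‖^2 ≤ (∑' n, ‖c n - d n‖^2) * (∑' n, ‖S.p n z₀‖^2) := by
  have hps := summable_p_sq S z₀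
  have hsub : Ffun S c z₀ - Ffun S d z₀ = ∑' n, (c n - d n) * S.p n z₀ := by
    unfold Ffun
    rw [← Summable.tsum_sub (summable_mul_of_sq hc hps) (summable_mul_of_sq hd hps)]
    exact tsum_congr fun n => by ring
  have hcd := summable_sub_sq hc hd
  have h := tsum_cs (x := fun n => c n - d n) (y := fun n => S.p n z₀) hcd hps
  rw [hsub]
  have h3 : (0:ℝ) ≤ ∑' n, ‖c n - d n‖^2 := tsum_nonneg fun n => sq_nonneg _
  have h4 : (0:ℝ) ≤ ∑' n, ‖S.p n z₀‖^2 := tsum_nonneg fun n => sq_nonneg _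
  calc ‖∑' n, (c n - d n) * S.p n z₀‖^2
      ≤ (Real.sqrt (∑' n, ‖c n - d n‖^2) * Real.sqrt (∑' n, ‖S.p n z₀‖^2))^2 :=
        pow_le_pow_left₀ (norm_nonneg _) h 2
    _ = (∑' n, ‖c n - d n‖^2) * (∑' n, ‖S.p n z₀‖^2) := by
        rw [mul_pow, Real.sq_sqrt h3, Real.sq_sqrt h4]

lemma xi_green {w : ℕ → ℂ} (hw : (Function.support w).Finite) (k : ℕ) :
    xiSeq S (fun n => jacobiMul S.a S.b w n - z₀ * w n) z₀ k = w k := by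
  obtain ⟨N, hN⟩ := support_bound hw
  set d : ℕ → ℂ := fun n => jacobiMul S.a S.b w n - z₀ * w n with hd
  have hd0 : ∀ j, N + 1 ≤ j → d j = 0 := by
    intro j hj
    match j, hj with
    | j + 1, hj =>
      have h0 : w j = 0 := hN j (by omega)
      have h1 : w (j+1) = 0 := hN _ (by omega)
      have h2 : w (j+2) = 0 := hN _ (by omega)
      show (S.a j:ℂ) * w j + (S.b (j+1):ℂ) * w (j+1) + (S.a (j+1):ℂ) * w (j+2)
        - z₀ * w (j+1) = 0
      rw [h0, h1, h2]; ring
  set G : ℕ → ℂ := fun j => (S.a j:ℂ) * (w (j+1) * coeffA S z₀ j k - w j * coeffA S z₀ (j+1) k)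
    with hG
  have hterm : ∀ n : ℕ, d (k+1+n) * coeffA S z₀ (k+1+n) k = G (k+(n+1)) - G (k+n) := by
    intro n
    rw [show k+1+n = (k+n)+1 by omega, show k+(n+1) = (k+n)+1 by omega]
    set j := k + n with hj
    have hrec := rec_fst S z₀ j k
    have hdj : d (j+1) = (S.a j:ℂ) * w j + (S.b (j+1):ℂ) * w (j+1)
        + (S.a (j+1):ℂ) * w (j+2) - z₀ * w (j+1) := rfl
    rw [hdj]
    simp only [hG]
    linear_combination (-(w (j+1))) * hrec
  have htsum : xiSeq S d z₀ k
      = ∑ n ∈ Finset.range (N+1), d (k+1+n) * coeffA S z₀ (k+1+n) k := by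
    apply tsum_eq_sum
    intro n hn
    have hnn : N + 1 ≤ k+1+n := by
      simp only [Finset.mem_range, not_lt] at hn
      omega
    rw [hd0 _ hnn, zero_mul]
  have hstep : xiSeq S d z₀ k = G (k + (N+1)) - G (k + 0) := by
    rw [htsum]
    rw [Finset.sum_congr rfl fun n _ => hterm n]
    exact Finset.sum_range_sub (fun i => G (k+i)) (N+1)
  have hG1 : G (k + (N+1)) = 0 := by
    simp only [hG]
    rw [hN (k+(N+1)) (by omega), hN (k+(N+1)+1) (by omega)]
    ring
  have hG0 : G (k + 0) = - w k := by
    simp only [hG, Nat.add_zero]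
    rw [coeffA_diag S z₀ k]
    have hw' := wronskian S z₀ k
    linear_combination (-(w k)) * hw'
  show xiSeq S d z₀ k = w k
  rw [hstep, hG1, hG0]
  ring

end Stmt16Aux
namespace Stmt16Aux
variable (S : JacobiSetup) (z₀ : ℂ) {c : ℕ → ℂ}

lemma tsum_e0_sq (γ : ℂ) : ∑' k, ‖γ * e0 k‖^2 = ‖γ‖^2 := by
  rw [tsum_eq_single 0 (fun k hk => by simp [e0, hk])]
  simp [e0]

lemma summable_e0_sq (γ : ℂ) : Summable fun k => ‖γ * e0 k‖^2 := by
  refine summable_of_ne_finset_zero (s := {0}) fun k hk => ?_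
  have hk0 : k ≠ 0 := by simpa using hk
  simp [e0, hk0]

lemma part_a (hc : Summable fun n => ‖c n‖ ^ 2) :
    jacobiGraph S.a S.b (xiSeq S c z₀)
      (fun k => z₀ * xiSeq S c z₀ k + c k - Ffun S c z₀ * e0 k) := by
  classical
  set P := ∑' n, ‖S.p n z₀‖^2 with hP
  set K := ∑' k, rowBound S z₀ k with hK
  have hKnn : 0 ≤ K := tsum_nonneg fun k => rowBound_nonneg S z₀ k
  have hPnn : 0 ≤ P := tsum_nonneg fun n => sq_nonneg _
  set tr : ℕ → ℕ → ℂ := fun N n => if n < N then c n else 0 with htr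
  have htrsum : ∀ N, Summable fun n => ‖tr N n‖^2 := fun N =>
    Summable.of_nonneg_of_le (fun n => sq_nonneg _) (fun n => by
      by_cases h : n < N <;> simp [htr, h, sq_nonneg]) hc
  set df : ℕ → ℕ → ℂ := fun N n => c n - tr N n with hdf
  have hdfsum : ∀ N, Summable fun n => ‖df N n‖^2 := fun N => summable_sub_sq hc (htrsum N)
  set tl : ℕ → ℝ := fun N => ∑' n, ‖c (n + N)‖^2 with htl
  have htlnn : ∀ N, 0 ≤ tl N := fun N => tsum_nonneg fun n => sq_nonneg _
  have htail : ∀ N, ∑' n, ‖df N n‖^2 = tl N := by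
    intro N
    have h1 := (Summable.sum_add_tsum_nat_add (f := fun n => ‖df N n‖^2) N (hdfsum N)).symm
    have h2 : ∑ i ∈ Finset.range N, ‖df N i‖^2 = 0 :=
      Finset.sum_eq_zero fun i hi => by simp [hdf, htr, Finset.mem_range.1 hi]
    have h3 : ∀ n, ‖df N (n + N)‖^2 = ‖c (n + N)‖^2 := fun n => by
      simp [hdf, htr, Nat.not_lt.2 (Nat.le_add_left N n)]
    rw [h1, h2, zero_add, htl]
    exact tsum_congr h3
  have htail0 : Tendsto tl atTop (𝓝 0) := by
    rw [htl]
    exact tendsto_sum_nat_add (fun n => ‖c n‖^2)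
  have hxidf : ∀ N k, xiSeq S (tr N) z₀ k - xiSeq S c z₀ k = - xiSeq S (df N) z₀ k := by
    intro N k
    have h := xi_sub S z₀ hc (htrsum N) k
    rw [hdf, h]
    ring
  have hxisum : ∀ N, Summable fun k => ‖xiSeq S (tr N) z₀ k - xiSeq S c z₀ k‖^2 := fun N =>
    (summable_xi_sq S z₀ (hdfsum N)).congr fun k => by rw [hxidf N k, norm_neg]
  have hxitsum : ∀ N, ∑' k, ‖xiSeq S (tr N) z₀ k - xiSeq S c z₀ k‖^2 ≤ tl N * K := by
    intro N
    have h1 : ∑' k, ‖xiSeq S (tr N) z₀ k - xiSeq S c z₀ k‖^2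
        = ∑' k, ‖xiSeq S (df N) z₀ k‖^2 :=
      tsum_congr fun k => by rw [hxidf N k, norm_neg]
    rw [h1, ← htail N]
    exact tsum_xi_sq_le S z₀ (hdfsum N)
  set X : ℕ → ℕ → ℂ := fun N n => (-z₀) * xiSeq S (df N) z₀ n with hX
  set Y : ℕ → ℕ → ℂ := fun N n => - df N n with hY
  set W : ℕ → ℕ → ℂ := fun N n => (Ffun S c z₀ - Ffun S (tr N) z₀) * e0 n with hW
  have heq : ∀ N n, jacobiMul S.a S.b (xiSeq S (tr N) z₀) n
      - (z₀ * xiSeq S c z₀ n + c n - Ffun S c z₀ * e0 n) = X N n + (Y N n + W N n) := by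
    intro N n
    rw [jmul_xi S z₀ (htrsum N) n]
    have h := hxidf N n
    have hdfn : df N n = c n - tr N n := rfl
    simp only [hX, hY, hW]
    linear_combination z₀ * h + hdfn
  have hX' : ∀ N, Summable fun n => ‖X N n‖^2 := fun N => by
    simp only [hX]
    exact summable_sq_smul _ (summable_xi_sq S z₀ (hdfsum N))
  have hY' : ∀ N, Summable fun n => ‖Y N n‖^2 := fun N => by
    simp only [hY]
    exact (hdfsum N).congr fun n => by rw [norm_neg]
  have hW' : ∀ N, Summable fun n => ‖W N n‖^2 := fun N => by
    simp only [hW]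
    exact summable_e0_sq _
  have hsum2 : ∀ N, Summable fun n => ‖jacobiMul S.a S.b (xiSeq S (tr N) z₀) n
      - (z₀ * xiSeq S c z₀ n + c n - Ffun S c z₀ * e0 n)‖^2 := fun N =>
    (summable_sq_two (hX' N) (summable_sq_two (hY' N) (hW' N))).congr fun n => by
      rw [heq N n]
  have hbound : ∀ N, ∑' n, ‖jacobiMul S.a S.b (xiSeq S (tr N) z₀) n
      - (z₀ * xiSeq S c z₀ n + c n - Ffun S c z₀ * e0 n)‖^2
      ≤ (2*(‖z₀‖^2*K) + 4 + 4*P) * tl N := by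
    intro N
    have e1 : ∑' n, ‖jacobiMul S.a S.b (xiSeq S (tr N) z₀) n
        - (z₀ * xiSeq S c z₀ n + c n - Ffun S c z₀ * e0 n)‖^2
        = ∑' n, ‖X N n + (Y N n + W N n)‖^2 := tsum_congr fun n => by rw [heq N n]
    have e2 := tsum_sq_two_le (hX' N) (summable_sq_two (hY' N) (hW' N))
    have e3 := tsum_sq_two_le (hY' N) (hW' N)
    have bX : ∑' n, ‖X N n‖^2 ≤ ‖z₀‖^2 * (tl N * K) := by
      have h1 : ∑' n, ‖X N n‖^2 = ‖-z₀‖^2 * ∑' n, ‖xiSeq S (df N) z₀ n‖^2 := by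
        simp only [hX]
        exact tsum_sq_smul _
      rw [h1, norm_neg]
      have h2 := tsum_xi_sq_le S z₀ (hdfsum N)
      rw [htail N] at h2
      exact mul_le_mul_of_nonneg_left h2 (sq_nonneg _)
    have bY : ∑' n, ‖Y N n‖^2 = tl N := by
      rw [← htail N]
      exact tsum_congr fun n => by simp only [hY, norm_neg]
    have bW : ∑' n, ‖W N n‖^2 ≤ tl N * P := by
      have h1 : ∑' n, ‖W N n‖^2 = ‖Ffun S c z₀ - Ffun S (tr N) z₀‖^2 := by
        simp only [hW]
        exact tsum_e0_sq _
      have h2 := Ffun_sub_sq_le S z₀ hc (htrsum N)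
      have h3 : ∑' n, ‖c n - tr N n‖^2 = tl N := htail N
      rw [h3] at h2
      rw [h1]
      exact h2
    calc ∑' n, ‖jacobiMul S.a S.b (xiSeq S (tr N) z₀) n
        - (z₀ * xiSeq S c z₀ n + c n - Ffun S c z₀ * e0 n)‖^2
        = ∑' n, ‖X N n + (Y N n + W N n)‖^2 := e1
      _ ≤ 2*(‖z₀‖^2*(tl N*K)) + 4*(tl N) + 4*(tl N*P) := by linarith
      _ = (2*(‖z₀‖^2*K) + 4 + 4*P) * tl N := by ring
  refine ⟨fun N => xiSeq S (tr N) z₀, ?_, hxisum, ?_, hsum2, ?_⟩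
  · intro N
    refine finite_of_bound N fun k hk => ?_
    have hz : ∀ n : ℕ, tr N (k+1+n) * coeffA S z₀ (k+1+n) k = 0 := fun n => by
      have : ¬ (k+1+n < N) := by omega
      simp [htr, this]
    calc xiSeq S (tr N) z₀ k = ∑' (_ : ℕ), (0:ℂ) := tsum_congr hz
      _ = 0 := tsum_zero
  · refine squeeze_zero (fun N => tsum_nonneg fun k => sq_nonneg _) hxitsum ?_
    simpa using htail0.mul_const K
  · refine squeeze_zero (fun N => tsum_nonneg fun k => sq_nonneg _) hbound ?_
    simpa using htail0.const_mul (2*(‖z₀‖^2*K) + 4 + 4*P)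

end Stmt16Aux
namespace Stmt16Aux
variable (S : JacobiSetup) (z₀ : ℂ)

lemma part_d {f g : ℕ → ℂ} (h : jacobiGraph S.a S.b f g) :
    xiSeq S (fun n => g n - z₀ * f n) z₀ = f := by
  classical
  set K := ∑' k, rowBound S z₀ k with hK
  obtain ⟨u, hfin, hS1, hT1, hS2, hT2⟩ := h
  have hfsq : Summable fun n => ‖f n‖^2 := graph_sq_f ⟨u, hfin, hS1, hT1, hS2, hT2⟩
  have hgsq : Summable fun n => ‖g n‖^2 := graph_sq_g ⟨u, hfin, hS1, hT1, hS2, hT2⟩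
  set c : ℕ → ℂ := fun n => g n - z₀ * f n with hc
  have hcsq : Summable fun n => ‖c n‖^2 :=
    (summable_sq_two hgsq (summable_sq_smul (-z₀) hfsq)).congr fun n => by
      rw [show g n + (-z₀) * f n = c n by rw [hc]; ring]
  set cm : ℕ → ℕ → ℂ := fun m n => jacobiMul S.a S.b (u m) n - z₀ * u m n with hcm
  have hcmfin : ∀ m, (Function.support (cm m)).Finite := by
    intro m
    obtain ⟨N, hN⟩ := support_bound (jacobiMul_support S.a S.b (hfin m))
    obtain ⟨M, hM⟩ := support_bound (hfin m)
    refine finite_of_bound (N + M) fun n hn => ?_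
    simp only [hcm]
    rw [hN n (by omega), hM n (by omega)]
    ring
  have hcmsq : ∀ m, Summable fun n => ‖cm m n‖^2 := fun m => fin_supp_summable_sq (hcmfin m)
  have hdiffeq : ∀ m n, cm m n - c n
      = (jacobiMul S.a S.b (u m) n - g n) + (-z₀) * (u m n - f n) := by
    intro m n
    simp only [hcm, hc]
    ring
  have hdiffsum : ∀ m, Summable fun n => ‖cm m n - c n‖^2 := fun m =>
    (summable_sq_two (hS2 m) (summable_sq_smul (-z₀) (hS1 m))).congr fun n => by
      rw [← hdiffeq m n]
  have hdifftend : Tendsto (fun m => ∑' n, ‖cm m n - c n‖^2) atTop (𝓝 0) := by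
    refine squeeze_zero (fun m => tsum_nonneg fun n => sq_nonneg _) (fun m => ?_)
      (g := fun m => 2 * ((∑' n, ‖jacobiMul S.a S.b (u m) n - g n‖^2)
        + ‖z₀‖^2 * ∑' n, ‖u m n - f n‖^2)) ?_
    · have e1 : ∑' n, ‖cm m n - c n‖^2
          = ∑' n, ‖(jacobiMul S.a S.b (u m) n - g n) + (-z₀) * (u m n - f n)‖^2 :=
        tsum_congr fun n => by rw [hdiffeq m n]
      have e2 := tsum_sq_two_le (hS2 m) (summable_sq_smul (-z₀) (hS1 m))
      have e3 : ∑' n, ‖(-z₀) * (u m n - f n)‖^2 = ‖z₀‖^2 * ∑' n, ‖u m n - f n‖^2 := by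
        rw [tsum_sq_smul, norm_neg]
      rw [e1]
      rw [e3] at e2
      exact e2
    · have := (hT2.add (hT1.const_mul (‖z₀‖^2))).const_mul 2
      simpa using this
  funext k
  have hxis : ∀ m, Summable fun j => ‖xiSeq S (cm m) z₀ j - xiSeq S c z₀ j‖^2 := by
    intro m
    refine (summable_xi_sq S z₀ (hdiffsum m)).congr fun j => ?_
    rw [xi_sub S z₀ (hcmsq m) hcsq j]
  have hxit : Tendsto (fun m => ∑' j, ‖xiSeq S (cm m) z₀ j - xiSeq S c z₀ j‖^2) atTop (𝓝 0) := by
    refine squeeze_zero (fun m => tsum_nonneg fun j => sq_nonneg _) (fun m => ?_)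
      (g := fun m => (∑' n, ‖cm m n - c n‖^2) * K) ?_
    · have e1 : ∑' j, ‖xiSeq S (cm m) z₀ j - xiSeq S c z₀ j‖^2
          = ∑' j, ‖xiSeq S (fun n => cm m n - c n) z₀ j‖^2 :=
        tsum_congr fun j => by rw [xi_sub S z₀ (hcmsq m) hcsq j]
      rw [e1, hK]
      exact tsum_xi_sq_le S z₀ (hdiffsum m)
    · simpa using hdifftend.mul_const K
  have h1 : Tendsto (fun m => xiSeq S (cm m) z₀ k) atTop (𝓝 (xiSeq S c z₀ k)) :=
    pointwise_of_l2 hxis hxit k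
  have h2 : ∀ m, xiSeq S (cm m) z₀ k = u m k := fun m => xi_green S z₀ (hfin m) k
  have h3 : Tendsto (fun m => u m k) atTop (𝓝 (f k)) := pointwise_of_l2 hS1 hT1 k
  exact tendsto_nhds_unique (h1.congr h2) h3

end Stmt16Aux

open Stmt16Aux in
/-- The operator `Ξ_{z₀} : c ↦ ξ(c,z₀)` satisfies: (a) `Ξ_{z₀}(c) ∈ D(T)` with
`(T − z₀)Ξ_{z₀}(c) + F_c(z₀)e₀ = c`; (b) its range is `D(T)`; (c) its kernel is `ℂe₀`;
(d) `Ξ_{z₀}((T − z₀)v) = v` for `v ∈ D(T)`, i.e. its restriction to `(T − z₀)(D(T))` is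
`(T − z₀)⁻¹`. -/
theorem stmt16 (S : JacobiSetup) (z₀ : ℂ) :
    (∀ c : ℕ → ℂ, Summable (fun n => ‖c n‖ ^ 2) →
      ∃ g : ℕ → ℂ, jacobiGraph S.a S.b (xiSeq S c z₀) g ∧
        ∀ n, g n - z₀ * xiSeq S c z₀ n + Ffun S c z₀ * e0 n = c n) ∧
    (∀ f : ℕ → ℂ, inDomT S.a S.b f ↔
      ∃ c : ℕ → ℂ, Summable (fun n => ‖c n‖ ^ 2) ∧ xiSeq S c z₀ = f) ∧
    (∀ c : ℕ → ℂ, Summable (fun n => ‖c n‖ ^ 2) →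
      (xiSeq S c z₀ = 0 ↔ ∃ γ : ℂ, c = fun n => γ * e0 n)) ∧
    (∀ f g : ℕ → ℂ, jacobiGraph S.a S.b f g →
      xiSeq S (fun n => g n - z₀ * f n) z₀ = f) := by
  refine ⟨?_, ?_, ?_, fun f g h => part_d S z₀ h⟩
  · intro c hc
    exact ⟨_, part_a S z₀ hc, fun n => by ring⟩
  · intro f
    constructor
    · rintro ⟨g, hg⟩
      refine ⟨fun n => g n - z₀ * f n, ?_, part_d S z₀ hg⟩
      exact (summable_sq_two (graph_sq_g hg) (summable_sq_smul (-z₀) (graph_sq_f hg))).congr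
        fun n => by rw [show g n + (-z₀) * f n = g n - z₀ * f n by ring]
    · rintro ⟨c, hc, rfl⟩
      exact ⟨_, part_a S z₀ hc⟩
  · intro c hc
    constructor
    · intro h0
      refine ⟨Ffun S c z₀, funext fun n => ?_⟩
      have h := jmul_xi S z₀ hc n
      rw [h0] at h
      have hz : jacobiMul S.a S.b (0 : ℕ → ℂ) n = 0 := by
        have := jacobiMul_zero_fun S.a S.b n
        convert this using 2
        rfl
      rw [hz] at h
      simp only [Pi.zero_apply, mul_zero, zero_add] at h
      linear_combination -h
    · rintro ⟨γ, rfl⟩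
      funext k
      have hz : ∀ n : ℕ, (fun n => γ * e0 n) (k+1+n) * coeffA S z₀ (k+1+n) k = 0 := by
        intro n
        have : k+1+n ≠ 0 := by omega
        simp [e0, this]
      calc xiSeq S (fun n => γ * e0 n) z₀ k = ∑' (_ : ℕ), (0:ℂ) := tsum_congr hz
        _ = 0 := tsum_zero
end
end

section
/- For all u, v, w ∈ ℂ the Nevanlinna functions satisfy: A(u,v) = C(u,w)A(w,v) − A(u,w)B(w,v); B(u,v) = D(u,w)A(w,v) − B(u,w)B(w,v); C(u,v) = C(u,w)C(w,v) − A(u,w)D(w,v); D(u,v) = D(u,w)C(w,v) − B(u,w)D(w,v). -/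
open Filter Topology MeasureTheory

noncomputable section

namespace Stmt17Aux

/-- A "quasi-solution" of the Jacobi recurrence at spectral parameter `z` with
boundary defect `e`. -/
def Sol (S : JacobiSetup) (z e : ℂ) (c : ℕ → ℂ) : Prop :=
  z * c 0 = (S.b 0 : ℂ) * c 0 + (S.a 0 : ℂ) * c 1 + e ∧
  ∀ n, z * c (n + 1) =
    (S.a (n + 1) : ℂ) * c (n + 2) + (S.b (n + 1) : ℂ) * c (n + 1) + (S.a n : ℂ) * c n

lemma sol_p (S : JacobiSetup) (z : ℂ) : Sol S z 0 fun n => S.p n z := by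
  have ha0 : (S.a 0 : ℂ) ≠ 0 := Complex.ofReal_ne_zero.mpr (S.ha 0).ne'
  refine ⟨?_, fun n => S.hrecp n z⟩
  simp only [S.hp0, S.hp1]
  field_simp
  ring

lemma sol_q (S : JacobiSetup) (z : ℂ) : Sol S z (-1) fun n => S.q n z := by
  have ha0 : (S.a 0 : ℂ) ≠ 0 := Complex.ofReal_ne_zero.mpr (S.ha 0).ne'
  refine ⟨?_, fun n => S.hrecq n z⟩
  simp only [S.hq0, S.hq1]
  field_simp
  ring

/-- Christoffel–Darboux / Green identity for quasi-solutions. -/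
lemma cd {S : JacobiSetup} {u v e f : ℂ} {c d : ℕ → ℂ}
    (hc : Sol S u e c) (hd : Sol S v f d) (n : ℕ) :
    (u - v) * ∑ k ∈ Finset.range (n + 1), c k * d k
      = (S.a n : ℂ) * (c (n + 1) * d n - c n * d (n + 1)) + e * d 0 - f * c 0 := by
  induction n with
  | zero =>
    simp only [zero_add, Finset.sum_range_one]
    linear_combination d 0 * hc.1 - c 0 * hd.1
  | succ n ih =>
    rw [Finset.sum_range_succ, mul_add, ih]
    linear_combination d (n + 1) * hc.2 n - c (n + 1) * hd.2 n

/-- The sequence of "Wronskian" pairings. -/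
def WW (S : JacobiSetup) (r s : ℕ → ℂ → ℂ) (u v : ℂ) (n : ℕ) : ℂ :=
  (S.a n : ℂ) * (r (n + 1) u * s n v - r n u * s (n + 1) v)

lemma wronskian (S : JacobiSetup) (w : ℂ) (n : ℕ) : WW S S.p S.q w w n = -1 := by
  have h := cd (sol_p S w) (sol_q S w) n
  simp only [sub_self, zero_mul, zero_add, S.hp0, S.hq0] at h
  have : (0 : ℂ) = (S.a n : ℂ) * (S.p (n+1) w * S.q n w - S.p n w * S.q (n+1) w) + 1 := by
    linear_combination h
  unfold WW
  linear_combination -this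

lemma summable_mul {S : JacobiSetup} (r s : ℕ → ℂ → ℂ)
    (hr : ∀ k z, ‖r k z‖ ^ 2 ≤ ‖S.p k z‖ ^ 2 + ‖S.q k z‖ ^ 2)
    (hs : ∀ k z, ‖s k z‖ ^ 2 ≤ ‖S.p k z‖ ^ 2 + ‖S.q k z‖ ^ 2)
    (u v : ℂ) : Summable fun k => r k u * s k v := by
  apply Summable.of_norm
  refine Summable.of_nonneg_of_le (fun k => norm_nonneg _) (fun k => ?_)
    ((S.indet u).add (S.indet v))
  rw [norm_mul]
  have h1 := hr k u
  have h2 := hs k v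
  have h3 := norm_nonneg (r k u)
  have h4 := norm_nonneg (s k v)
  nlinarith [sq_nonneg (‖r k u‖ - ‖s k v‖)]

lemma hp_bound (S : JacobiSetup) : ∀ k z, ‖S.p k z‖ ^ 2 ≤ ‖S.p k z‖ ^ 2 + ‖S.q k z‖ ^ 2 :=
  fun k z => le_add_of_nonneg_right (by positivity)

lemma hq_bound (S : JacobiSetup) : ∀ k z, ‖S.q k z‖ ^ 2 ≤ ‖S.p k z‖ ^ 2 + ‖S.q k z‖ ^ 2 :=
  fun k z => le_add_of_nonneg_left (by positivity)

lemma tendsto_WW {S : JacobiSetup} {u v e f : ℂ} {r s : ℕ → ℂ → ℂ}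
    (hc : Sol S u e fun n => r n u) (hd : Sol S v f fun n => s n v)
    (hsum : Summable fun k => r k u * s k v) :
    Filter.Tendsto (WW S r s u v) Filter.atTop
      (nhds ((u - v) * ∑' k, r k u * s k v - e * s 0 v + f * r 0 u)) := by
  have h1 : Filter.Tendsto (fun n => (u - v) * ∑ k ∈ Finset.range (n + 1), r k u * s k v)
      Filter.atTop (nhds ((u - v) * ∑' k, r k u * s k v)) :=
    (hsum.hasSum.tendsto_sum_nat.comp (Filter.tendsto_add_atTop_nat 1)).const_mul _
  have h2 : ∀ n, WW S r s u v n
      = (u - v) * ∑ k ∈ Finset.range (n + 1), r k u * s k v - e * s 0 v + f * r 0 u := by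
    intro n
    have := cd hc hd n
    unfold WW
    linear_combination -this
  exact (((h1.sub tendsto_const_nhds).add tendsto_const_nhds).congr fun n => (h2 n).symm)

/-- The Plücker identity. -/
lemma plucker (a x1 x2 y1 y2 z1 z2 t1 t2 : ℂ)
    (h : a * (z2 * t1 - z1 * t2) = -1) :
    a * (x2 * y1 - x1 * y2)
      = a * (x2 * z1 - x1 * z2) * (a * (t2 * y1 - t1 * y2))
        - a * (x2 * t1 - x1 * t2) * (a * (z2 * y1 - z1 * y2)) := by
  linear_combination (a * (x2 * y1 - x1 * y2)) * h

lemma WW_factor (S : JacobiSetup) (r s : ℕ → ℂ → ℂ) (u v w : ℂ) (n : ℕ) :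
    WW S r s u v n
      = WW S r S.p u w n * WW S S.q s w v n - WW S r S.q u w n * WW S S.p s w v n := by
  have h := wronskian S w n
  unfold WW at h ⊢
  exact plucker _ (r n u) (r (n+1) u) (s n v) (s (n+1) v)
    (S.p n w) (S.p (n+1) w) (S.q n w) (S.q (n+1) w) h

end Stmt17Aux

/-- The three-point identities for the Nevanlinna functions. -/
theorem stmt17 (S : JacobiSetup) (u v w : ℂ) :
    nevA S u v = nevC S u w * nevA S w v - nevA S u w * nevB S w v ∧
    nevB S u v = nevD S u w * nevA S w v - nevB S u w * nevB S w v ∧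
    nevC S u v = nevC S u w * nevC S w v - nevA S u w * nevD S w v ∧
    nevD S u v = nevD S u w * nevC S w v - nevB S u w * nevD S w v := by
  open Stmt17Aux in
  have tA : ∀ x y : ℂ, Tendsto (WW S S.q S.q x y) atTop (𝓝 (nevA S x y)) := by
    intro x y
    have heq : nevA S x y
        = (x - y) * ∑' k, S.q k x * S.q k y - (-1) * S.q 0 y + (-1) * S.q 0 x := by
      simp [nevA, S.hq0]
    rw [heq]
    exact tendsto_WW (sol_q S x) (sol_q S y)
      (summable_mul S.q S.q (hq_bound S) (hq_bound S) x y)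
  have tB : ∀ x y : ℂ, Tendsto (WW S S.p S.q x y) atTop (𝓝 (nevB S x y)) := by
    intro x y
    have heq : nevB S x y
        = (x - y) * ∑' k, S.p k x * S.q k y - 0 * S.q 0 y + (-1) * S.p 0 x := by
      simp [nevB, S.hp0]
      ring
    rw [heq]
    exact tendsto_WW (sol_p S x) (sol_q S y)
      (summable_mul S.p S.q (hp_bound S) (hq_bound S) x y)
  have tC : ∀ x y : ℂ, Tendsto (WW S S.q S.p x y) atTop (𝓝 (nevC S x y)) := by
    intro x y
    have heq : nevC S x y
        = (x - y) * ∑' k, S.q k x * S.p k y - (-1) * S.p 0 y + 0 * S.q 0 x := by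
      simp [nevC, S.hp0]
      ring
    rw [heq]
    exact tendsto_WW (sol_q S x) (sol_p S y)
      (summable_mul S.q S.p (hq_bound S) (hp_bound S) x y)
  have tD : ∀ x y : ℂ, Tendsto (WW S S.p S.p x y) atTop (𝓝 (nevD S x y)) := by
    intro x y
    have heq : nevD S x y
        = (x - y) * ∑' k, S.p k x * S.p k y - 0 * S.p 0 y + 0 * S.p 0 x := by
      simp [nevD]
    rw [heq]
    exact tendsto_WW (sol_p S x) (sol_p S y)
      (summable_mul S.p S.p (hp_bound S) (hp_bound S) x y)
  refine ⟨?_, ?_, ?_, ?_⟩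
  · refine tendsto_nhds_unique (tA u v) ?_
    exact (((tC u w).mul (tA w v)).sub ((tA u w).mul (tB w v))).congr
      fun n => (WW_factor S S.q S.q u v w n).symm
  · refine tendsto_nhds_unique (tB u v) ?_
    exact (((tD u w).mul (tA w v)).sub ((tB u w).mul (tB w v))).congr
      fun n => (WW_factor S S.p S.q u v w n).symm
  · refine tendsto_nhds_unique (tC u v) ?_
    exact (((tC u w).mul (tC w v)).sub ((tA u w).mul (tD w v))).congr
      fun n => (WW_factor S S.q S.p u v w n).symm
  · refine tendsto_nhds_unique (tD u v) ?_
    exact (((tD u w).mul (tC w v)).sub ((tB u w).mul (tD w v))).congr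
      fun n => (WW_factor S S.p S.p u v w n).symm
end
end

section
/- For all u, v ∈ ℂ: A(u,v) = A(u)C(v) − A(v)C(u); B(u,v) = B(u)C(v) − A(v)D(u); C(u,v) = A(u)D(v) − B(v)C(u); D(u,v) = B(u)D(v) − B(v)D(u). -/
open Filter Topology MeasureTheory

noncomputable section

namespace Nev18Aux

/-- Green's (Christoffel–Darboux type) identity for partial sums. -/
lemma green (a b : ℕ → ℝ) (u v : ℂ) (f g : ℕ → ℂ) (cf cg : ℂ)
    (hf0 : u * f 0 = (a 0 : ℂ) * f 1 + (b 0 : ℂ) * f 0 + cf)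
    (hg0 : v * g 0 = (a 0 : ℂ) * g 1 + (b 0 : ℂ) * g 0 + cg)
    (hf : ∀ n, u * f (n+1) =
      (a (n+1) : ℂ) * f (n+2) + (b (n+1) : ℂ) * f (n+1) + (a n : ℂ) * f n)
    (hg : ∀ n, v * g (n+1) =
      (a (n+1) : ℂ) * g (n+2) + (b (n+1) : ℂ) * g (n+1) + (a n : ℂ) * g n) :
    ∀ n, (u - v) * ∑ k ∈ Finset.range (n+1), f k * g k
      = (a n : ℂ) * (f (n+1) * g n - f n * g (n+1)) + (cf * g 0 - f 0 * cg) := by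
  intro n
  induction n with
  | zero =>
      simp only [zero_add, Finset.sum_range_one]
      linear_combination g 0 * hf0 - f 0 * hg0
  | succ n ih =>
      rw [Finset.sum_range_succ]
      linear_combination ih + g (n+1) * hf n - f (n+1) * hg n

lemma summable_rs (S : JacobiSetup) (r s : ℕ → ℂ → ℂ)
    (hr : ∀ k z, ‖r k z‖ ^ 2 ≤ ‖S.p k z‖ ^ 2 + ‖S.q k z‖ ^ 2)
    (hs : ∀ k z, ‖s k z‖ ^ 2 ≤ ‖S.p k z‖ ^ 2 + ‖S.q k z‖ ^ 2) (u v : ℂ) :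
    Summable fun k => r k u * s k v := by
  apply Summable.of_norm
  have hsum : Summable fun k =>
      ((‖S.p k u‖ ^ 2 + ‖S.q k u‖ ^ 2) + (‖S.p k v‖ ^ 2 + ‖S.q k v‖ ^ 2)) / 2 :=
    ((S.indet u).add (S.indet v)).div_const 2
  refine Summable.of_nonneg_of_le (fun k => norm_nonneg _) (fun k => ?_) hsum
  rw [norm_mul]
  nlinarith [hr k u, hs k v, sq_nonneg (‖r k u‖ - ‖s k v‖), norm_nonneg (r k u),
    norm_nonneg (s k v)]

lemma tendsto_green (a b : ℕ → ℝ) (u v : ℂ) (f g : ℕ → ℂ) (cf cg : ℂ)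
    (hf0 : u * f 0 = (a 0 : ℂ) * f 1 + (b 0 : ℂ) * f 0 + cf)
    (hg0 : v * g 0 = (a 0 : ℂ) * g 1 + (b 0 : ℂ) * g 0 + cg)
    (hf : ∀ n, u * f (n+1) =
      (a (n+1) : ℂ) * f (n+2) + (b (n+1) : ℂ) * f (n+1) + (a n : ℂ) * f n)
    (hg : ∀ n, v * g (n+1) =
      (a (n+1) : ℂ) * g (n+2) + (b (n+1) : ℂ) * g (n+1) + (a n : ℂ) * g n)
    (hsum : Summable fun k => f k * g k) :
    Tendsto (fun n => (a n : ℂ) * (f (n+1) * g n - f n * g (n+1))) atTop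
      (𝓝 ((u - v) * ∑' k, f k * g k - (cf * g 0 - f 0 * cg))) := by
  have h2 : Tendsto (fun n => ∑ k ∈ Finset.range (n+1), f k * g k) atTop
      (𝓝 (∑' k, f k * g k)) :=
    hsum.hasSum.tendsto_sum_nat.comp (tendsto_add_atTop_nat 1)
  have h3 := (h2.const_mul (u - v)).sub_const (cf * g 0 - f 0 * cg)
  refine h3.congr fun n => ?_
  rw [green a b u v f g cf cg hf0 hg0 hf hg n]
  ring

lemma hp_bound (S : JacobiSetup) : ∀ k z, ‖S.p k z‖ ^ 2 ≤ ‖S.p k z‖ ^ 2 + ‖S.q k z‖ ^ 2 :=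
  fun k z => le_add_of_nonneg_right (by positivity)

lemma hq_bound (S : JacobiSetup) : ∀ k z, ‖S.q k z‖ ^ 2 ≤ ‖S.p k z‖ ^ 2 + ‖S.q k z‖ ^ 2 :=
  fun k z => by nlinarith [sq_nonneg ‖S.p k z‖]

lemma hp_init (S : JacobiSetup) (u : ℂ) :
    u * S.p 0 u = (S.a 0 : ℂ) * S.p 1 u + (S.b 0 : ℂ) * S.p 0 u + 0 := by
  have ha : (S.a 0 : ℂ) ≠ 0 := by
    exact_mod_cast ne_of_gt (S.ha 0)
  rw [S.hp0, S.hp1]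
  field_simp
  ring

lemma hq_init (S : JacobiSetup) (u : ℂ) :
    u * S.q 0 u = (S.a 0 : ℂ) * S.q 1 u + (S.b 0 : ℂ) * S.q 0 u + (-1) := by
  have ha : (S.a 0 : ℂ) ≠ 0 := by
    exact_mod_cast ne_of_gt (S.ha 0)
  rw [S.hq0, S.hq1]
  field_simp
  ring

/-- `Wₙ(q(u),q(v)) → A(u,v)`. -/
lemma tendsto_qq (S : JacobiSetup) (u v : ℂ) :
    Tendsto (fun n => (S.a n : ℂ) * (S.q (n+1) u * S.q n v - S.q n u * S.q (n+1) v))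
      atTop (𝓝 (nevA S u v)) := by
  have h := tendsto_green S.a S.b u v (fun k => S.q k u) (fun k => S.q k v) (-1) (-1)
    (hq_init S u) (hq_init S v) (fun n => S.hrecq n u) (fun n => S.hrecq n v)
    (summable_rs S S.q S.q (hq_bound S) (hq_bound S) u v)
  simpa [nevA, S.hq0] using h

/-- `Wₙ(p(u),q(v)) → B(u,v)`. -/
lemma tendsto_pq (S : JacobiSetup) (u v : ℂ) :
    Tendsto (fun n => (S.a n : ℂ) * (S.p (n+1) u * S.q n v - S.p n u * S.q (n+1) v))
      atTop (𝓝 (nevB S u v)) := by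
  have h := tendsto_green S.a S.b u v (fun k => S.p k u) (fun k => S.q k v) 0 (-1)
    (hp_init S u) (hq_init S v) (fun n => S.hrecp n u) (fun n => S.hrecq n v)
    (summable_rs S S.p S.q (hp_bound S) (hq_bound S) u v)
  have e : (u - v) * (∑' k, S.p k u * S.q k v) - ((0 : ℂ) * S.q 0 v - S.p 0 u * (-1))
      = nevB S u v := by
    rw [nevB, S.hp0]; ring
  rw [e] at h
  exact h

/-- `Wₙ(q(u),p(v)) → C(u,v)`. -/
lemma tendsto_qp (S : JacobiSetup) (u v : ℂ) :
    Tendsto (fun n => (S.a n : ℂ) * (S.q (n+1) u * S.p n v - S.q n u * S.p (n+1) v))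
      atTop (𝓝 (nevC S u v)) := by
  have h := tendsto_green S.a S.b u v (fun k => S.q k u) (fun k => S.p k v) (-1) 0
    (hq_init S u) (hp_init S v) (fun n => S.hrecq n u) (fun n => S.hrecp n v)
    (summable_rs S S.q S.p (hq_bound S) (hp_bound S) u v)
  have e : (u - v) * (∑' k, S.q k u * S.p k v) - ((-1 : ℂ) * S.p 0 v - S.q 0 u * 0)
      = nevC S u v := by
    rw [nevC, S.hp0]; ring
  rw [e] at h
  exact h

/-- `Wₙ(p(u),p(v)) → D(u,v)`. -/
lemma tendsto_pp (S : JacobiSetup) (u v : ℂ) :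
    Tendsto (fun n => (S.a n : ℂ) * (S.p (n+1) u * S.p n v - S.p n u * S.p (n+1) v))
      atTop (𝓝 (nevD S u v)) := by
  have h := tendsto_green S.a S.b u v (fun k => S.p k u) (fun k => S.p k v) 0 0
    (hp_init S u) (hp_init S v) (fun n => S.hrecp n u) (fun n => S.hrecp n v)
    (summable_rs S S.p S.p (hp_bound S) (hp_bound S) u v)
  simpa [nevD] using h

lemma nevB00 (S : JacobiSetup) : nevB S 0 0 = -1 := by
  simp [nevB]

end Nev18Aux

/-- The two-variable Nevanlinna functions in terms of the one-variable ones
(`A(u) := A(u,0)` etc.). -/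
theorem stmt18 (S : JacobiSetup) (u v : ℂ) :
    nevA S u v = nevA S u 0 * nevC S v 0 - nevA S v 0 * nevC S u 0 ∧
    nevB S u v = nevB S u 0 * nevC S v 0 - nevA S v 0 * nevD S u 0 ∧
    nevC S u v = nevA S u 0 * nevD S v 0 - nevB S v 0 * nevC S u 0 ∧
    nevD S u v = nevB S u 0 * nevD S v 0 - nevB S v 0 * nevD S u 0 := by
  open Nev18Aux in
  -- Wronskian limits
  have tAuv := tendsto_qq S u v
  have tBuv := tendsto_pq S u v
  have tCuv := tendsto_qp S u v
  have tDuv := tendsto_pp S u v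
  have tAu := tendsto_qq S u 0
  have tAv := tendsto_qq S v 0
  have tBu := tendsto_pq S u 0
  have tBv := tendsto_pq S v 0
  have tCu := tendsto_qp S u 0
  have tCv := tendsto_qp S v 0
  have tDu := tendsto_pp S u 0
  have tDv := tendsto_pp S v 0
  have t00 := tendsto_pq S 0 0
  rw [nevB00 S] at t00
  -- Plücker identities at each n, then uniqueness of limits
  have e1 : nevC S u 0 * nevA S v 0 - nevA S u 0 * nevC S v 0 = nevA S u v * (-1) :=
    tendsto_nhds_unique ((tCu.mul tAv).sub (tAu.mul tCv))
      ((tAuv.mul t00).congr fun n => by ring)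
  have e2 : nevD S u 0 * nevA S v 0 - nevB S u 0 * nevC S v 0 = nevB S u v * (-1) :=
    tendsto_nhds_unique ((tDu.mul tAv).sub (tBu.mul tCv))
      ((tBuv.mul t00).congr fun n => by ring)
  have e3 : nevC S u 0 * nevB S v 0 - nevA S u 0 * nevD S v 0 = nevC S u v * (-1) :=
    tendsto_nhds_unique ((tCu.mul tBv).sub (tAu.mul tDv))
      ((tCuv.mul t00).congr fun n => by ring)
  have e4 : nevD S u 0 * nevB S v 0 - nevB S u 0 * nevD S v 0 = nevD S u v * (-1) :=
    tendsto_nhds_unique ((tDu.mul tBv).sub (tBu.mul tDv))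
      ((tDuv.mul t00).congr fun n => by ring)
  refine ⟨by linear_combination e1, by linear_combination e2,
    by linear_combination e3, by linear_combination e4⟩
end
end
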